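/- arXiv:1208.2730 — 5 statements merged into one kernel-verified Lean document; each statement's English description precedes it below -/
import Mathlib

section
/- Let b and c be nonnegative integers and let (n_1, …, n_j) be a sequence of positive integers with n_1 + n_2 + … + n_j = b + 3c. Then (n_1, …, n_j) is (b,c)-reachable if and only if neither of the following holds: (1) b = 0, j = 2, and n_2 = 1; (2) b = 0, j = 3, n_2 = 2, and n_3 = 1. -/
/-- Add `d` dots to column `i`. -/
def addDots {j : ℕ} (i : Fin j) (d : ℕ) (f : Fin j → ℕ) : Fin j → ℕ :=
  Function.update f i (f i + d)

/-- `DotReachable b c n` means that the dot configuration `n` on `j` columns can be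
produced by a play of the game consisting of exactly `b` moves of type (1) and exactly
`c` further moves, each of type (2), (3), or (4):
(1) add one dot to any one column; (2) add one dot to each of three distinct columns;
(3) choose columns `i < i'` and add one dot to column `i` and two dots to column `i'`;
(4) add three dots to a single column. -/
inductive DotReachable {j : ℕ} : ℕ → ℕ → (Fin j → ℕ) → Prop
  | init : DotReachable 0 0 (fun _ => 0)
  | move1 {b c : ℕ} {f : Fin j → ℕ} (i : Fin j) :
      DotReachable b c f → DotReachable (b + 1) c (addDots i 1 f)
  | move2 {b c : ℕ} {f : Fin j → ℕ} (i₁ i₂ i₃ : Fin j)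
      (h₁₂ : i₁ ≠ i₂) (h₁₃ : i₁ ≠ i₃) (h₂₃ : i₂ ≠ i₃) :
      DotReachable b c f →
        DotReachable b (c + 1) (addDots i₁ 1 (addDots i₂ 1 (addDots i₃ 1 f)))
  | move3 {b c : ℕ} {f : Fin j → ℕ} (i i' : Fin j) (h : i < i') :
      DotReachable b c f → DotReachable b (c + 1) (addDots i 1 (addDots i' 2 f))
  | move4 {b c : ℕ} {f : Fin j → ℕ} (i : Fin j) :
      DotReachable b c f → DotReachable b (c + 1) (addDots i 3 f)

lemma addDots_apply {j : ℕ} (i : Fin j) (d : ℕ) (f : Fin j → ℕ) (k : Fin j) :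
    addDots i d f k = if k = i then f k + d else f k := by
  unfold addDots
  rw [Function.update_apply]
  split
  · subst ‹k = i›; rfl
  · rfl

lemma reach_of_eq {j b c} {f g : Fin j → ℕ} (h : DotReachable b c f) (e : f = g) :
    DotReachable b c g := e ▸ h

lemma sum_addDots {j : ℕ} (i : Fin j) (d : ℕ) (f : Fin j → ℕ) :
    ∑ k, addDots i d f k = (∑ k, f k) + d := by
  have : ∀ k, addDots i d f k = f k + (if k = i then d else 0) := by
    intro k; rw [addDots_apply]; split <;> simp
  rw [Finset.sum_congr rfl (fun k _ => this k), Finset.sum_add_distrib,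
    Finset.sum_ite_eq' Finset.univ i (fun _ => d)]
  simp

lemma DotReachable.add {j : ℕ} {b1 c1 b2 c2 : ℕ} {f g : Fin j → ℕ}
    (h1 : DotReachable b1 c1 f) (h2 : DotReachable b2 c2 g) :
    DotReachable (b1 + b2) (c1 + c2) (fun k => f k + g k) := by
  induction h2 with
  | init => simpa using h1
  | move1 i h ih =>
      refine reach_of_eq (DotReachable.move1 i ih) ?_
      funext k; simp only [addDots_apply]; split <;> omega
  | move2 i₁ i₂ i₃ h12 h13 h23 h ih =>
      refine reach_of_eq (DotReachable.move2 i₁ i₂ i₃ h12 h13 h23 ih) ?_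
      funext k; simp only [addDots_apply]; split <;> split <;> split <;> omega
  | move3 i i' hlt h ih =>
      refine reach_of_eq (DotReachable.move3 i i' hlt ih) ?_
      funext k; simp only [addDots_apply]; split <;> split <;> omega
  | move4 i h ih =>
      refine reach_of_eq (DotReachable.move4 i ih) ?_
      funext k; simp only [addDots_apply]; split <;> omega

lemma reach_sum {j : ℕ} : ∀ (S : ℕ) (n : Fin j → ℕ), ∑ k, n k = S → DotReachable S 0 n := by
  intro S
  induction S with
  | zero =>
      intro n h
      have hz : ∀ k, n k = 0 := by
        intro k
        have := Finset.sum_eq_zero_iff.mp h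
        exact this k (Finset.mem_univ k)
      refine reach_of_eq DotReachable.init ?_
      funext k; exact (hz k).symm
  | succ S ih =>
      intro n h
      have hk : ∃ k, 0 < n k := by
        by_contra hc
        push_neg at hc
        have : ∑ k, n k = 0 := Finset.sum_eq_zero (fun k _ => Nat.le_zero.mp (hc k))
        omega
      obtain ⟨k, hk⟩ := hk
      set n' : Fin j → ℕ := fun m => if m = k then n k - 1 else n m with hn'
      have he : addDots k 1 n' = n := by
        funext m; simp only [addDots_apply, hn']; split <;> [skip; rfl]
        · subst ‹m = k›; omega
      have hs : ∑ m, n' m = S := by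
        have := sum_addDots k 1 n'
        rw [he] at this; omega
      exact reach_of_eq (DotReachable.move1 k (ih n' hs)) he

lemma reach_conc {j : ℕ} (i : Fin j) : ∀ c : ℕ,
    DotReachable 0 c (fun k => if k = i then 3 * c else 0) := by
  intro c
  induction c with
  | zero => refine reach_of_eq DotReachable.init ?_; funext k; split <;> rfl
  | succ c ih =>
      refine reach_of_eq (DotReachable.move4 i ih) ?_
      funext k; simp only [addDots_apply]; split <;> omega

lemma exists_le_sum {j : ℕ} : ∀ (S : ℕ) (m : Fin j → ℕ), S ≤ ∑ k, m k →
    ∃ u : Fin j → ℕ, (∀ k, u k ≤ m k) ∧ ∑ k, u k = S := by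
  intro S
  induction S with
  | zero => intro m _; exact ⟨fun _ => 0, fun k => Nat.zero_le _, by simp⟩
  | succ S ih =>
      intro m hS
      obtain ⟨u, hu, hsu⟩ := ih m (by omega)
      have hlt : ∃ k, u k < m k := by
        by_contra hc
        push_neg at hc
        have : ∑ k, m k ≤ ∑ k, u k := Finset.sum_le_sum (fun k _ => hc k)
        omega
      obtain ⟨k, hk⟩ := hlt
      refine ⟨addDots k 1 u, ?_, ?_⟩
      · intro m'
        rw [addDots_apply]; split
        · subst ‹m' = k›; omega
        · exact hu m'
      · rw [sum_addDots]; omega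

lemma reach_spread {j : ℕ} (hj : 3 ≤ j) : ∀ (c : ℕ) (t : Fin j → ℕ),
    ∑ k, t k = 3 * c → (∀ k, t k ≤ c) → DotReachable 0 c t := by
  intro c
  induction c with
  | zero =>
      intro t hs _
      have hz : ∀ k, t k = 0 := by
        intro k; have := Finset.sum_eq_zero_iff.mp (by omega : ∑ k, t k = 0)
        exact this k (Finset.mem_univ k)
      refine reach_of_eq DotReachable.init ?_
      funext k; exact (hz k).symm
  | succ c ih =>
      intro t hs hb
      have hne : Nonempty (Fin j) := ⟨⟨0, by omega⟩⟩
      obtain ⟨i₁, -, h1⟩ := Finset.exists_max_image Finset.univ t Finset.univ_nonempty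
      have hcard1 : (Finset.univ.erase i₁).Nonempty := by
        rw [← Finset.card_pos, Finset.card_erase_of_mem (Finset.mem_univ i₁)]
        simp [Fintype.card_fin]; omega
      obtain ⟨i₂, hi₂, h2⟩ := Finset.exists_max_image _ t hcard1
      have hcard2 : ((Finset.univ.erase i₁).erase i₂).Nonempty := by
        rw [← Finset.card_pos, Finset.card_erase_of_mem hi₂,
          Finset.card_erase_of_mem (Finset.mem_univ i₁)]
        simp [Fintype.card_fin]; omega
      obtain ⟨i₃, hi₃, h3⟩ := Finset.exists_max_image _ t hcard2
      have h12 : i₁ ≠ i₂ := fun h => (Finset.mem_erase.mp hi₂).1 h.symm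
      have hi₃' := Finset.mem_erase.mp hi₃
      have h23 : i₂ ≠ i₃ := fun h => hi₃'.1 h.symm
      have h13 : i₁ ≠ i₃ := fun h => (Finset.mem_erase.mp hi₃'.2).1 h.symm
      -- sum decompositions
      have e1 : t i₁ + ∑ k ∈ Finset.univ.erase i₁, t k = ∑ k, t k :=
        Finset.add_sum_erase _ t (Finset.mem_univ i₁)
      have e2 : t i₂ + ∑ k ∈ (Finset.univ.erase i₁).erase i₂, t k
          = ∑ k ∈ Finset.univ.erase i₁, t k :=
        Finset.add_sum_erase _ t hi₂
      have e3 : t i₃ + ∑ k ∈ ((Finset.univ.erase i₁).erase i₂).erase i₃, t k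
          = ∑ k ∈ (Finset.univ.erase i₁).erase i₂, t k :=
        Finset.add_sum_erase _ t hi₃
      -- positivity of t i₃
      have hpos3 : 1 ≤ t i₃ := by
        by_contra hc
        have hz : ∑ k ∈ ((Finset.univ.erase i₁).erase i₂).erase i₃, t k = 0 := by
          refine Finset.sum_eq_zero fun k hk => ?_
          have hk' := Finset.mem_erase.mp hk
          have := h3 k hk'.2
          omega
        have hb1 := hb i₁; have hb2 := hb i₂
        omega
      have hpos2 : 1 ≤ t i₂ := le_trans hpos3 (h2 i₃ hi₃'.2)
      have hpos1 : 1 ≤ t i₁ := le_trans hpos2 (h1 i₂ (Finset.mem_univ i₂))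
      set t' : Fin j → ℕ := fun k => if k = i₁ ∨ k = i₂ ∨ k = i₃ then t k - 1 else t k with ht'
      have he : addDots i₁ 1 (addDots i₂ 1 (addDots i₃ 1 t')) = t := by
        funext k
        simp only [addDots_apply, ht']
        by_cases e1 : k = i₁ <;> by_cases e2 : k = i₂ <;> by_cases e3 : k = i₃ <;>
          simp_all <;> omega
      have hs' : ∑ k, t' k = 3 * c := by
        have := sum_addDots i₃ 1 t'
        have := sum_addDots i₂ 1 (addDots i₃ 1 t')
        have := sum_addDots i₁ 1 (addDots i₂ 1 (addDots i₃ 1 t'))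
        rw [he] at *
        omega
      have hb' : ∀ k, t' k ≤ c := by
        intro k
        simp only [ht']
        split
        · have := hb k; omega
        · rename_i hnk
          push_neg at hnk
          obtain ⟨hk1, hk2, hk3⟩ := hnk
          have hk3' : k ∈ ((Finset.univ.erase i₁).erase i₂).erase i₃ := by
            simp [Finset.mem_erase, hk1, hk2, hk3]
          have hle : t k ≤ t i₃ := h3 k (Finset.mem_erase.mp hk3').2
          by_contra hc
          -- then t k = c+1 and t i₁,i₂,i₃ ≥ c+1, sum ≥ 4(c+1) > 3(c+1)
          have hsum4 : t k ≤ ∑ k' ∈ ((Finset.univ.erase i₁).erase i₂).erase i₃, t k' :=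
            Finset.single_le_sum (fun _ _ => Nat.zero_le _) hk3'
          have hb1 := hb i₁; have hb2 := hb i₂; have hb3 := hb i₃
          have h21 : t i₂ ≤ t i₁ := h1 i₂ (Finset.mem_univ i₂)
          have h32 : t i₃ ≤ t i₂ := h2 i₃ hi₃'.2
          omega
      exact reach_of_eq (DotReachable.move2 i₁ i₂ i₃ h12 h13 h23 (ih t' hs' hb')) he

lemma reach_two {j : ℕ} (i i' : Fin j) (hlt : i < i') : ∀ (c y : ℕ), y ≤ 3 * c → y ≠ 1 →
    DotReachable 0 c (fun k => if k = i' then y else if k = i then 3 * c - y else 0) := by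
  have hne : i ≠ i' := ne_of_lt hlt
  intro c
  induction c with
  | zero =>
      intro y hy _
      refine reach_of_eq DotReachable.init ?_
      funext k
      have : y = 0 := by omega
      subst this
      split <;> [rfl; split <;> rfl]
  | succ c ih =>
      intro y hy hy1
      rcases eq_or_ne y 0 with rfl | y0
      · refine reach_of_eq (DotReachable.move4 i (ih 0 (by omega) (by omega))) ?_
        funext k
        simp only [addDots_apply]
        by_cases e1 : k = i' <;> by_cases e2 : k = i <;> simp_all <;> omega
      rcases eq_or_ne y 2 with rfl | y2
      · refine reach_of_eq (DotReachable.move3 i i' hlt (ih 0 (by omega) (by omega))) ?_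
        funext k
        simp only [addDots_apply]
        by_cases e1 : k = i' <;> by_cases e2 : k = i <;> simp_all <;> omega
      rcases eq_or_ne y 4 with rfl | y4
      · refine reach_of_eq (DotReachable.move3 i i' hlt (ih 2 (by omega) (by omega))) ?_
        funext k
        simp only [addDots_apply]
        by_cases e1 : k = i' <;> by_cases e2 : k = i <;> simp_all <;> omega
      · refine reach_of_eq (DotReachable.move4 i' (ih (y - 3) (by omega) (by omega))) ?_
        funext k
        simp only [addDots_apply]
        by_cases e1 : k = i' <;> by_cases e2 : k = i <;> simp_all <;> omega

def cfg3 (t1 t2 t3 : ℕ) : Fin 3 → ℕ := fun k => if k = 2 then t3 else if k = 1 then t2 else t1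

lemma reach_three : ∀ (c t1 t2 t3 : ℕ), t1 + t2 + t3 = 3 * c →
    (t3 = 0 → t2 ≠ 1) → (t3 = 1 → 1 ≤ t1 ∧ 1 ≤ t2 ∧ t2 ≠ 2) →
    DotReachable 0 c (cfg3 t1 t2 t3) := by
  intro c
  induction c with
  | zero =>
      intro t1 t2 t3 hs _ _
      refine reach_of_eq DotReachable.init ?_
      funext k
      simp only [cfg3]
      split <;> [omega; split <;> omega]
  | succ c ih =>
      intro t1 t2 t3 hs h0 h1
      have heq : ∀ a1 a2 a3 d1 d2 d3 : ℕ, a1 + d1 = t1 → a2 + d2 = t2 → a3 + d3 = t3 →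
          (∀ k : Fin 3, (if k = 0 then d1 else if k = 1 then d2 else d3) = 0 → True) → True :=
        fun _ _ _ _ _ _ _ _ _ _ => trivial
      clear heq
      match ht3 : t3, h0, h1 with
      | 0, h0, _ =>
        -- two-column cases on t2
        rcases eq_or_ne t2 0 with rfl | t20
        · refine reach_of_eq (DotReachable.move4 0 (ih (t1 - 3) 0 0 (by omega) (by omega) (by omega))) ?_
          funext k; fin_cases k <;> simp [addDots_apply, cfg3] <;> omega
        rcases eq_or_ne t2 2 with rfl | t22
        · refine reach_of_eq (DotReachable.move3 0 1 (by decide) (ih (t1 - 1) 0 0 (by omega) (by omega) (by omega))) ?_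
          funext k; fin_cases k <;> simp [addDots_apply, cfg3] <;> omega
        rcases eq_or_ne t2 4 with rfl | t24
        · refine reach_of_eq (DotReachable.move3 0 1 (by decide) (ih (t1 - 1) 2 0 (by omega) (by omega) (by omega))) ?_
          funext k; fin_cases k <;> simp [addDots_apply, cfg3] <;> omega
        · refine reach_of_eq (DotReachable.move4 1 (ih t1 (t2 - 3) 0 (by omega) (by omega) (by omega))) ?_
          funext k; fin_cases k <;> simp [addDots_apply, cfg3] <;> omega
      | 1, _, h1 =>
        obtain ⟨ha, hb, hc⟩ := h1 rfl
        refine reach_of_eq (DotReachable.move2 0 1 2 (by decide) (by decide) (by decide)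
          (ih (t1 - 1) (t2 - 1) 0 (by omega) (by omega) (by omega))) ?_
        funext k; fin_cases k <;> simp [addDots_apply, cfg3] <;> omega
      | 2, _, _ =>
        rcases eq_or_ne t2 1 with rfl | t21
        · refine reach_of_eq (DotReachable.move3 1 2 (by decide) (ih t1 0 0 (by omega) (by omega) (by omega))) ?_
          funext k; fin_cases k <;> simp [addDots_apply, cfg3] <;> omega
        rcases Nat.eq_zero_or_pos t1 with rfl | t1p
        · refine reach_of_eq (DotReachable.move3 1 2 (by decide) (ih 0 (t2 - 1) 0 (by omega) (by omega) (by omega))) ?_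
          funext k; fin_cases k <;> simp [addDots_apply, cfg3] <;> omega
        · refine reach_of_eq (DotReachable.move3 0 2 (by decide) (ih (t1 - 1) t2 0 (by omega) (by omega) (by omega))) ?_
          funext k; fin_cases k <;> simp [addDots_apply, cfg3] <;> omega
      | 3, _, _ =>
        rcases eq_or_ne t2 1 with rfl | t21
        · refine reach_of_eq (DotReachable.move2 0 1 2 (by decide) (by decide) (by decide)
            (ih (t1 - 1) 0 2 (by omega) (by omega) (by omega))) ?_
          funext k; fin_cases k <;> simp [addDots_apply, cfg3] <;> omega
        · refine reach_of_eq (DotReachable.move4 2 (ih t1 t2 0 (by omega) (by omega) (by omega))) ?_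
          funext k; fin_cases k <;> simp [addDots_apply, cfg3] <;> omega
      | 4, _, _ =>
        rcases Nat.eq_zero_or_pos t1 with rfl | t1p
        · have t2p : 1 ≤ t2 := by omega
          refine reach_of_eq (DotReachable.move3 1 2 (by decide) (ih 0 (t2 - 1) 2 (by omega) (by omega) (by omega))) ?_
          funext k; fin_cases k <;> simp [addDots_apply, cfg3] <;> omega
        · refine reach_of_eq (DotReachable.move3 0 2 (by decide) (ih (t1 - 1) t2 2 (by omega) (by omega) (by omega))) ?_
          funext k; fin_cases k <;> simp [addDots_apply, cfg3] <;> omega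
      | (m + 5), _, _ =>
        refine reach_of_eq (DotReachable.move4 2 (ih t1 t2 (m + 2) (by omega) (by omega) (by omega))) ?_
        funext k; fin_cases k <;> simp [addDots_apply, cfg3] <;> omega

lemma card_le_sum_one {j : ℕ} (s : Finset (Fin j)) (f : Fin j → ℕ)
    (h : ∀ k ∈ s, 1 ≤ f k) : s.card ≤ ∑ k ∈ s, f k := by
  calc s.card = ∑ _k ∈ s, 1 := by simp
    _ ≤ ∑ k ∈ s, f k := Finset.sum_le_sum h

lemma rev4aux (k0 q1 q2 q3 : Fin 4) (h01 : k0 ≠ q1) (h02 : k0 ≠ q2) (h03 : k0 ≠ q3)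
    (h12 : q1 ≠ q2) (h13 : q1 ≠ q3) (h23 : q2 ≠ q3)
    (hcover : ∀ k : Fin 4, k = k0 ∨ k = q1 ∨ k = q2 ∨ k = q3)
    (n : Fin 4 → ℕ) (e0 : n k0 = 3) (e1 : n q1 = 1) (e2 : n q2 = 1) (e3 : n q3 = 1) :
    DotReachable 0 2 n := by
  have h4 : DotReachable 0 1 (addDots k0 3 (fun _ => 0)) :=
    DotReachable.move4 k0 DotReachable.init
  have h2 : DotReachable 0 1 (addDots q1 1 (addDots q2 1 (addDots q3 1 (fun _ => 0)))) :=
    DotReachable.move2 q1 q2 q3 h12 h13 h23 DotReachable.init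
  have h := h4.add h2
  refine reach_of_eq h ?_
  funext k
  rcases hcover k with rfl | rfl | rfl | rfl <;>
    simp [addDots_apply, h01, h02, h03, h12, h13, h23, Ne.symm h01, Ne.symm h02,
      Ne.symm h03, Ne.symm h12, Ne.symm h13, Ne.symm h23, e0, e1, e2, e3]

lemma rev4 {j : ℕ} (hj : 4 ≤ j) : ∀ (c b : ℕ) (n : Fin j → ℕ), (∀ k, 0 < n k) →
    ∑ k, n k = b + 3 * c → DotReachable b c n := by
  intro c
  induction c using Nat.strong_induction_on with
  | _ c ih =>
  intro b n hpos hsum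
  by_cases hsp : 3 * c ≤ ∑ k, min (n k) c
  · -- spread case
    obtain ⟨u, hu, hus⟩ := exists_le_sum (3 * c) (fun k => min (n k) c) hsp
    have hu1 : ∀ k, u k ≤ n k := fun k => le_trans (hu k) (min_le_left _ _)
    have hu2 : ∀ k, u k ≤ c := fun k => le_trans (hu k) (min_le_right _ _)
    have h1 : DotReachable 0 c u := reach_spread (by omega) c u hus hu2
    have hrem : ∑ k, (n k - u k) = b := by
      have e : ∑ k, ((n k - u k) + u k) = ∑ k, n k :=
        Finset.sum_congr rfl fun k _ => by have := hu1 k; omega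
      rw [Finset.sum_add_distrib] at e
      omega
    have h2 : DotReachable b 0 (fun k => n k - u k) := reach_sum b _ hrem
    have h3 := h2.add h1
    simp only [Nat.add_zero, Nat.zero_add] at h3
    refine reach_of_eq h3 ?_
    funext k; have := hu1 k; omega
  · -- concentrated case
    have hk0 : ∃ k0, c < n k0 := by
      by_contra hc
      push_neg at hc
      have : ∑ k, min (n k) c = ∑ k, n k :=
        Finset.sum_congr rfl fun k _ => by have := hc k; omega
      omega
    obtain ⟨k0, hk0⟩ := hk0
    have hc0 : c ≠ 0 := by rintro rfl; omega
    have hc1 : c ≠ 1 := by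
      rintro rfl
      have : ∑ k, min (n k) 1 = ∑ k, 1 :=
        Finset.sum_congr rfl fun k _ => by have := hpos k; omega
      rw [Finset.sum_const, Finset.card_univ, Fintype.card_fin, smul_eq_mul, mul_one] at this
      omega
    by_cases hbig : 4 ≤ n k0
    · -- strip a move4 from k0
      set n' : Fin j → ℕ := fun k => if k = k0 then n k0 - 3 else n k with hn'
      have he : addDots k0 3 n' = n := by
        funext k; simp only [addDots_apply, hn']; split
        · subst ‹k = k0›; omega
        · rfl
      have hs' : ∑ k, n' k = b + 3 * (c - 1) := by
        have := sum_addDots k0 3 n'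
        rw [he] at this
        omega
      have hpos' : ∀ k, 0 < n' k := by
        intro k; simp only [hn']; split <;> [omega; exact hpos k]
      have := (ih (c - 1) (by omega) b n' hpos' hs').move4 k0
      rw [he] at this
      have hcc : c - 1 + 1 = c := by omega
      rwa [hcc] at this
    · -- n k0 = 3, c = 2, j = 4, b = 0
      have hc2 : c = 2 := by omega
      subst hc2
      have hnk0 : n k0 = 3 := by omega
      -- every other column is 1
      have hone : ∀ k, k ≠ k0 → n k = 1 := by
        intro k1 hk1ne
        by_contra hne
        have h2le : 2 ≤ n k1 := by have := hpos k1; omega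
        have hk1m : k1 ∈ Finset.univ.erase k0 := by simp [hk1ne]
        have e1 : min (n k0) 2 + ∑ k ∈ Finset.univ.erase k0, min (n k) 2
            = ∑ k, min (n k) 2 := Finset.add_sum_erase _ (fun k => min (n k) 2) (Finset.mem_univ k0)
        have e2 : min (n k1) 2 + ∑ k ∈ (Finset.univ.erase k0).erase k1, min (n k) 2
            = ∑ k ∈ Finset.univ.erase k0, min (n k) 2 := Finset.add_sum_erase _ (fun k => min (n k) 2) hk1m
        have e3 : ((Finset.univ.erase k0).erase k1).card
            ≤ ∑ k ∈ (Finset.univ.erase k0).erase k1, min (n k) 2 :=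
          card_le_sum_one _ _ (fun k _ => by have := hpos k; omega)
        rw [Finset.card_erase_of_mem hk1m, Finset.card_erase_of_mem (Finset.mem_univ k0),
          Finset.card_univ, Fintype.card_fin] at e3
        have h5 : min (n k0) 2 = 2 := by omega
        have h6 : min (n k1) 2 = 2 := by omega
        omega
      have hj4 : j = 4 := by
        have e1 : min (n k0) 2 + ∑ k ∈ Finset.univ.erase k0, min (n k) 2
            = ∑ k, min (n k) 2 := Finset.add_sum_erase _ (fun k => min (n k) 2) (Finset.mem_univ k0)
        have e3 : (Finset.univ.erase k0).card
            ≤ ∑ k ∈ Finset.univ.erase k0, min (n k) 2 :=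
          card_le_sum_one _ _ (fun k _ => by have := hpos k; omega)
        rw [Finset.card_erase_of_mem (Finset.mem_univ k0),
          Finset.card_univ, Fintype.card_fin] at e3
        have h5 : min (n k0) 2 = 2 := by omega
        omega
      subst hj4
      have hb0 : b = 0 := by
        have e1 : n k0 + ∑ k ∈ Finset.univ.erase k0, n k = ∑ k, n k :=
          Finset.add_sum_erase _ _ (Finset.mem_univ k0)
        have e2 : ∑ k ∈ Finset.univ.erase k0, n k = ∑ k ∈ Finset.univ.erase k0, 1 :=
          Finset.sum_congr rfl fun k hk => hone k (Finset.mem_erase.mp hk).1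
        rw [Finset.sum_const, Finset.card_erase_of_mem (Finset.mem_univ k0),
          Finset.card_univ, Fintype.card_fin, smul_eq_mul, mul_one] at e2
        omega
      subst hb0
      fin_cases k0
      · exact rev4aux 0 1 2 3 (by decide) (by decide) (by decide) (by decide) (by decide)
          (by decide) (by decide) n hnk0 (hone 1 (by decide)) (hone 2 (by decide)) (hone 3 (by decide))
      · exact rev4aux 1 0 2 3 (by decide) (by decide) (by decide) (by decide) (by decide)
          (by decide) (by decide) n hnk0 (hone 0 (by decide)) (hone 2 (by decide)) (hone 3 (by decide))
      · exact rev4aux 2 0 1 3 (by decide) (by decide) (by decide) (by decide) (by decide)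
          (by decide) (by decide) n hnk0 (hone 0 (by decide)) (hone 1 (by decide)) (hone 3 (by decide))
      · exact rev4aux 3 0 1 2 (by decide) (by decide) (by decide) (by decide) (by decide)
          (by decide) (by decide) n hnk0 (hone 0 (by decide)) (hone 1 (by decide)) (hone 2 (by decide))

lemma rev1 (b c : ℕ) (n : Fin 1 → ℕ) (hsum : ∑ k, n k = b + 3 * c) : DotReachable b c n := by
  have h1 : DotReachable 0 c (fun k : Fin 1 => if k = 0 then 3 * c else 0) := reach_conc 0 c
  have h2 : DotReachable b 0 (fun _ : Fin 1 => b) := reach_sum b _ (by simp)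
  have h3 := h2.add h1
  simp only [Nat.add_zero, Nat.zero_add] at h3
  refine reach_of_eq h3 ?_
  funext k
  have hk : k = 0 := Subsingleton.elim _ _
  subst hk
  rw [Fin.sum_univ_one] at hsum
  simp [hsum]

lemma rev2 (b c : ℕ) (n : Fin 2 → ℕ) (hpos : ∀ k, 0 < n k) (hsum : ∑ k, n k = b + 3 * c)
    (hexc : n 1 = 1 → 1 ≤ b) : DotReachable b c n := by
  rcases Nat.eq_zero_or_pos c with rfl | hc
  · exact reach_sum b n (by omega)
  rw [Fin.sum_univ_two] at hsum
  set y : ℕ := if n 1 = 1 then 0 else min (n 1) (3 * c) with hy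
  have hp1 := hpos 0; have hp2 := hpos 1
  have hy3 : y ≤ 3 * c := by rw [hy]; split <;> omega
  have hy1 : y ≠ 1 := by rw [hy]; split <;> omega
  have hyle : y ≤ n 1 := by rw [hy]; split <;> omega
  have hxle : 3 * c - y ≤ n 0 := by
    rw [hy]; split
    · have := hexc ‹n 1 = 1›; omega
    · omega
  have h1 := reach_two (0 : Fin 2) 1 (by decide) c y hy3 hy1
  set r : Fin 2 → ℕ := fun k => if k = 1 then n 1 - y else n 0 - (3 * c - y) with hr
  have hrs : ∑ k, r k = b := by rw [Fin.sum_univ_two]; simp only [hr]; simp; omega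
  have h2 := reach_sum b r hrs
  have h3 := h2.add h1
  simp only [Nat.add_zero, Nat.zero_add] at h3
  refine reach_of_eq h3 ?_
  funext k; fin_cases k <;> simp [hr] <;> omega

lemma rev3build (b c t1 t2 t3 : ℕ) (n : Fin 3 → ℕ)
    (hs : t1 + t2 + t3 = 3 * c) (h0 : t3 = 0 → t2 ≠ 1)
    (h1 : t3 = 1 → 1 ≤ t1 ∧ 1 ≤ t2 ∧ t2 ≠ 2)
    (hb1 : t1 ≤ n 0) (hb2 : t2 ≤ n 1) (hb3 : t3 ≤ n 2)
    (hsum : n 0 + n 1 + n 2 = b + 3 * c) : DotReachable b c n := by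
  have h1' := reach_three c t1 t2 t3 hs h0 h1
  set r : Fin 3 → ℕ := fun k => if k = 2 then n 2 - t3 else if k = 1 then n 1 - t2 else n 0 - t1
    with hr
  have hrs : ∑ k, r k = b := by rw [Fin.sum_univ_three]; simp only [hr]; simp; omega
  have h2 := reach_sum b r hrs
  have h3 := h2.add h1'
  simp only [Nat.add_zero, Nat.zero_add] at h3
  refine reach_of_eq h3 ?_
  funext k; fin_cases k <;> simp [hr, cfg3] <;> omega

lemma rev3 (b c : ℕ) (n : Fin 3 → ℕ) (hpos : ∀ k, 0 < n k) (hsum : ∑ k, n k = b + 3 * c)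
    (hexc : n 1 = 2 → n 2 = 1 → 1 ≤ b) : DotReachable b c n := by
  rcases Nat.eq_zero_or_pos c with rfl | hc
  · exact reach_sum b n (by omega)
  rw [Fin.sum_univ_three] at hsum
  have hp1 := hpos 0; have hp2 := hpos 1; have hp3 := hpos 2
  by_cases hz : n 2 = 1
  · by_cases hy2 : n 1 = 2
    · have hb := hexc hy2 hz
      exact rev3build b c (3 * c - 2) 1 1 n (by omega) (by omega) (by omega)
        (by omega) (by omega) (by omega) hsum
    · exact rev3build b c (3 * c - 1 - min (n 1) (3 * c - 2)) (min (n 1) (3 * c - 2)) 1 n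
        (by omega) (by omega) (by omega) (by omega) (by omega) (by omega) hsum
  · exact rev3build b c (3 * c - min (n 2) (3 * c) - min (n 1) (3 * c - min (n 2) (3 * c)))
      (min (n 1) (3 * c - min (n 2) (3 * c))) (min (n 2) (3 * c)) n
      (by omega) (by omega) (by omega) (by omega) (by omega) (by omega) hsum

lemma fwd2 : ∀ {b c : ℕ} {n : Fin 2 → ℕ}, DotReachable b c n → b = 0 → n 1 ≠ 1 := by
  intro b c n h
  induction h with
  | init => intro _; simp
  | move1 i h ih => intro hb; exact absurd hb (Nat.succ_ne_zero _)
  | move2 i₁ i₂ i₃ h12 h13 h23 h ih =>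
      intro _
      exfalso
      have l1 := i₁.isLt; have l2 := i₂.isLt; have l3 := i₃.isLt
      have e12 : i₁.val ≠ i₂.val := fun e => h12 (Fin.ext e)
      have e13 : i₁.val ≠ i₃.val := fun e => h13 (Fin.ext e)
      have e23 : i₂.val ≠ i₃.val := fun e => h23 (Fin.ext e)
      omega
  | move3 i i' hlt h ih =>
      intro hb
      have l1 := i.isLt; have l2 := i'.isLt
      have hv : i.val < i'.val := hlt
      have hi : i = 0 := Fin.ext (by omega)
      have hi' : i' = 1 := Fin.ext (by omega)
      subst hi hi'
      simp [addDots_apply]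
  | move4 i h ih =>
      intro hb
      fin_cases i <;> simp_all [addDots_apply]
lemma fwd3 : ∀ {b c : ℕ} {n : Fin 3 → ℕ}, DotReachable b c n → b = 0 →
    (n 2 = 0 → n 1 ≠ 1) ∧ (n 2 = 1 → n 1 ≠ 0 ∧ n 1 ≠ 2) := by
  intro b c n h
  induction h with
  | init => intro _; simp
  | move1 i h ih => intro hb; exact absurd hb (Nat.succ_ne_zero _)
  | move2 i₁ i₂ i₃ h12 h13 h23 h ih =>
      intro hb
      have H := ih hb
      fin_cases i₁ <;> fin_cases i₂ <;> fin_cases i₃ <;>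
        simp_all [addDots_apply] <;> omega
  | move3 i i' hlt h ih =>
      intro hb
      have H := ih hb
      have hv : i.val < i'.val := hlt
      fin_cases i <;> fin_cases i' <;> simp_all [addDots_apply] <;> omega
  | move4 i h ih =>
      intro hb
      have H := ih hb
      fin_cases i <;> simp_all [addDots_apply] <;> omega

/-- A sequence of positive integers `(n_1, …, n_j)` with sum `b + 3c` is
`(b, c)`-reachable if and only if neither of the following holds:
(1) `b = 0`, `j = 2`, and `n_2 = 1`; (2) `b = 0`, `j = 3`, `n_2 = 2`, and `n_3 = 1`. -/
theorem dot_reachable_iff {j : ℕ} (hj : 0 < j) (b c : ℕ) (n : Fin j → ℕ)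
    (hpos : ∀ k, 0 < n k) (hsum : ∑ k, n k = b + 3 * c) :
    DotReachable b c n ↔
      ¬((b = 0 ∧ j = 2 ∧ (∀ k : Fin j, (k : ℕ) = 1 → n k = 1)) ∨
        (b = 0 ∧ j = 3 ∧ (∀ k : Fin j, (k : ℕ) = 1 → n k = 2) ∧
          (∀ k : Fin j, (k : ℕ) = 2 → n k = 1))) := by
  constructor
  · intro h hexc
    rcases hexc with ⟨hb, hj2, hn⟩ | ⟨hb, hj3, hn1, hn2⟩
    · subst hj2; subst hb
      exact fwd2 h rfl (hn 1 rfl)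
    · subst hj3; subst hb
      exact ((fwd3 h rfl).2 (hn2 2 rfl)).2 (hn1 1 rfl)
  · intro hexc
    match j, hj, n, hpos, hsum, hexc with
    | 1, hj, n, hpos, hsum, hexc => exact rev1 b c n hsum
    | 2, hj, n, hpos, hsum, hexc =>
        refine rev2 b c n hpos hsum fun h1 => ?_
        by_contra hb
        exact hexc (Or.inl ⟨by omega, rfl, fun k hk => by
          have : k = 1 := Fin.ext hk
          rw [this]; exact h1⟩)
    | 3, hj, n, hpos, hsum, hexc =>
        refine rev3 b c n hpos hsum fun h1 h2 => ?_
        by_contra hb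
        refine hexc (Or.inr ⟨by omega, rfl, fun k hk => ?_, fun k hk => ?_⟩)
        · have : k = 1 := Fin.ext hk
          rw [this]; exact h1
        · have : k = 2 := Fin.ext hk
          rw [this]; exact h2
    | (j' + 4), hj, n, hpos, hsum, hexc => exact rev4 (by omega) c b n hpos hsum
end

section
/- Let m ≥ 1, c ≥ 0, and N be integers with N ≥ 3c + 3, N ≤ C(m+2, 2), and (N, c, m) ≠ (6, 1, 2). Then there exists a set S of exactly N distinct points of ℙ² over K which contains a conic collection of 3c + 3 points, and such that S imposes independent conditions on forms of degree m. -/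
open MvPolynomial

/-- A homogeneous polynomial `F` in three variables vanishes at a point `x` of the
projective plane if it vanishes at a (equivalently, any) nonzero representative. -/
def PVanishes {K : Type*} [Field K] (F : MvPolynomial (Fin 3) K)
    (x : Projectivization K (Fin 3 → K)) : Prop :=
  MvPolynomial.eval x.rep F = 0

/-- `f` enumerates a conic collection of `3c + 3` distinct points
`q₁, q₂, q₃, p₁, …, p_{3c}` of the projective plane: for every `0 ≤ k ≤ c − 1`, the six
points `q₁, q₂, q₃, p_{3k+1}, p_{3k+2}, p_{3k+3}` lie on a conic, i.e. some nonzero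
homogeneous polynomial of degree 2 vanishes at all six of them. -/
def IsConicCollection {K : Type*} [Field K] (c : ℕ)
    (f : Fin (3 * c + 3) → Projectivization K (Fin 3 → K)) : Prop :=
  Function.Injective f ∧
    ∀ k : Fin c, ∃ F : MvPolynomial (Fin 3) K, F ≠ 0 ∧ F.IsHomogeneous 2 ∧
      PVanishes F (f ⟨0, by omega⟩) ∧ PVanishes F (f ⟨1, by omega⟩) ∧
      PVanishes F (f ⟨2, by omega⟩) ∧
      ∀ i : Fin 3, PVanishes F
        (f ⟨3 + 3 * (k : ℕ) + (i : ℕ), by have := k.isLt; have := i.isLt; omega⟩)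

/-- A finite set `S` of points of the projective plane imposes independent conditions
on forms of degree `m` if the map sending a homogeneous polynomial of degree `m` to its
tuple of values at the fixed representatives of the points of `S` is surjective. -/
def ImposesIndependentConditions {K : Type*} [Field K] (m : ℕ)
    (S : Finset (Projectivization K (Fin 3 → K))) : Prop :=
  ∀ v : Projectivization K (Fin 3 → K) → K, ∃ F : MvPolynomial (Fin 3) K,
    F.IsHomogeneous m ∧ ∀ x ∈ S, MvPolynomial.eval x.rep F = v x



namespace ConicColl

def col (m j a : ℕ) : List (ℕ × ℕ) := (List.range (m + 1 - j - a)).map (fun i => (j, a + i))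

def rr (m j : ℕ) : ℕ := (m + 1 - j) % 3

def chunks (m : ℕ) : List (List (ℕ × ℕ)) :=
  col m (m-3) 1 :: col m (m-2) 0 :: (List.range (m-3)).map (fun j => col m j (rr m j))

def tailL (m : ℕ) : List (ℕ × ℕ) :=
  (m-1, 1) :: (List.range (m-3)).flatMap (fun j => (List.range (rr m j)).map (fun i => (j, i)))

def eList (m : ℕ) : List (ℕ × ℕ) :=
  (m,0) :: (m-1,0) :: (m-3,0) :: ((chunks m).flatten ++ tailL m)

lemma length_col (m j a : ℕ) : (col m j a).length = m + 1 - j - a := by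
  simp [col]

lemma mem_col {m j a : ℕ} {x : ℕ × ℕ} (h : x ∈ col m j a) :
    x.1 = j ∧ a ≤ x.2 ∧ x.2 + 1 ≤ m + 1 - j := by
  simp only [col, List.mem_map, List.mem_range] at h
  obtain ⟨i, hi, rfl⟩ := h
  refine ⟨rfl, ?_, ?_⟩ <;> dsimp only <;> omega

lemma col_nodup (m j a : ℕ) : (col m j a).Nodup := by
  apply List.Nodup.map _ List.nodup_range
  intro x y h
  simpa using congrArg Prod.snd h

lemma chunks_dvd (m : ℕ) (hm : 3 ≤ m) : ∀ l ∈ chunks m, 3 ∣ l.length := by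
  intro l hl
  simp only [chunks, List.mem_cons, List.mem_map, List.mem_range] at hl
  rcases hl with rfl | rfl | ⟨j, hj, rfl⟩
  · rw [length_col]; omega
  · rw [length_col]; omega
  · rw [length_col, rr]; omega

lemma mem_flatten_chunks {m : ℕ} {x : ℕ × ℕ} (hm : 3 ≤ m) (h : x ∈ (chunks m).flatten) :
    (x.1 = m-3 ∧ 1 ≤ x.2 ∧ x.2 ≤ 3) ∨ (x.1 = m-2 ∧ x.2 ≤ 2) ∨
    (x.1 < m-3 ∧ rr m x.1 ≤ x.2 ∧ x.2 + x.1 ≤ m) := by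
  rw [List.mem_flatten] at h
  obtain ⟨l, hl, hx⟩ := h
  simp only [chunks, List.mem_cons, List.mem_map, List.mem_range] at hl
  rcases hl with rfl | rfl | ⟨j, hj, rfl⟩
  · left; have := mem_col hx; omega
  · right; left; have := mem_col hx; omega
  · right; right
    obtain ⟨h1, h2, h3⟩ := mem_col hx
    rw [h1]
    exact ⟨hj, h2, by omega⟩

lemma mem_tailL {m : ℕ} {x : ℕ × ℕ} (h : x ∈ tailL m) :
    x = (m-1, 1) ∨ (x.1 < m-3 ∧ x.2 < rr m x.1) := by
  simp only [tailL, List.mem_cons, List.mem_flatMap, List.mem_map, List.mem_range] at h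
  rcases h with rfl | ⟨j, hj, i, hi, rfl⟩
  · left; rfl
  · right; dsimp only; exact ⟨hj, hi⟩

lemma rr_le (m j : ℕ) : rr m j ≤ 2 := by rw [rr]; omega

lemma mem_eList_grid {m : ℕ} {x : ℕ × ℕ} (hm : 3 ≤ m) (h : x ∈ eList m) : x.1 + x.2 ≤ m := by
  simp only [eList, List.mem_cons, List.mem_append] at h
  rcases h with rfl | rfl | rfl | h | h
  · dsimp only; omega
  · dsimp only; omega
  · dsimp only; omega
  · rcases mem_flatten_chunks hm h with h | h | h <;> omega
  · rcases mem_tailL h with rfl | h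
    · dsimp only; omega
    · have := rr_le m x.1; omega

lemma eList_nodup (m : ℕ) (hm : 3 ≤ m) : (eList m).Nodup := by
  have hdisj : ∀ j₁ a₁ j₂ a₂, j₁ ≠ j₂ → (col m j₁ a₁).Disjoint (col m j₂ a₂) := by
    intro j₁ a₁ j₂ a₂ hne x hx1 hx2
    have := (mem_col hx1).1; have := (mem_col hx2).1
    omega
  have hJ : ((chunks m).flatten).Nodup := by
    rw [List.nodup_flatten]
    constructor
    · intro l hl
      simp only [chunks, List.mem_cons, List.mem_map, List.mem_range] at hl
      rcases hl with rfl | rfl | ⟨j, hj, rfl⟩ <;> exact col_nodup _ _ _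
    · refine List.Pairwise.cons ?_ (List.Pairwise.cons ?_ ?_)
      · intro l hl
        simp only [List.mem_cons, List.mem_map, List.mem_range] at hl
        rcases hl with rfl | ⟨j, hj, rfl⟩
        · exact hdisj _ _ _ _ (by omega)
        · exact hdisj _ _ _ _ (by omega)
      · intro l hl
        simp only [List.mem_map, List.mem_range] at hl
        obtain ⟨j, hj, rfl⟩ := hl
        exact hdisj _ _ _ _ (by omega)
      · rw [List.pairwise_map]
        apply List.Pairwise.imp _ (List.pairwise_lt_range (n := m-3))
        intro a b hab
        exact hdisj _ _ _ _ (by omega)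
  have hT : (tailL m).Nodup := by
    rw [tailL, List.nodup_cons]
    constructor
    · intro h
      simp only [List.mem_flatMap, List.mem_map, List.mem_range] at h
      obtain ⟨j, hj, i, hi, heq⟩ := h
      have h1 := congrArg Prod.fst heq
      dsimp only at h1
      omega
    · rw [List.nodup_flatMap]
      constructor
      · intro j hj
        apply List.Nodup.map _ List.nodup_range
        intro x y h
        simpa using congrArg Prod.snd h
      · apply List.Pairwise.imp _ (List.pairwise_lt_range (n := m-3))
        intro a b hab x hx1 hx2
        simp only [List.mem_map, List.mem_range] at hx1 hx2
        obtain ⟨i, _, rfl⟩ := hx1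
        obtain ⟨i', _, heq⟩ := hx2
        have := congrArg Prod.fst heq
        dsimp only at this
        omega
  have hJT : ∀ x ∈ (chunks m).flatten, x ∉ tailL m := by
    intro x hx hx'
    rcases mem_tailL hx' with rfl | h'
    · rcases mem_flatten_chunks hm hx with h | h | h <;> dsimp only at h <;> omega
    · rcases mem_flatten_chunks hm hx with h | h | h <;> omega
  rw [eList]
  rw [List.nodup_cons, List.nodup_cons, List.nodup_cons]
  have hnotmem : ∀ y : ℕ × ℕ, (y = (m,0) ∨ y = (m-1,0) ∨ y = (m-3,0)) →
      y ∉ (chunks m).flatten ++ tailL m := by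
    intro y hy hmem
    rw [List.mem_append] at hmem
    rcases hmem with h | h
    · rcases mem_flatten_chunks hm h with h' | h' | h' <;>
        rcases hy with rfl | rfl | rfl <;> dsimp only at h' <;> omega
    · rcases mem_tailL h with h' | h' <;> rcases hy with rfl | rfl | rfl
      · have := congrArg Prod.snd h'; dsimp only at this; omega
      · have h1 := congrArg Prod.snd h'; have h2 := congrArg Prod.fst h'
        dsimp only at h1 h2; omega
      · have := congrArg Prod.snd h'; dsimp only at this; omega
      · dsimp only at h'; omega
      · dsimp only at h'; omega
      · dsimp only at h'; omega
  refine ⟨?_, ?_, ?_, ?_⟩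
  · simp only [List.mem_cons]
    push_neg
    refine ⟨by intro h; have := congrArg Prod.fst h; dsimp only at this; omega,
      by intro h; have := congrArg Prod.fst h; dsimp only at this; omega,
      hnotmem _ (Or.inl rfl)⟩
  · simp only [List.mem_cons]
    push_neg
    refine ⟨by intro h; have := congrArg Prod.fst h; dsimp only at this; omega,
      hnotmem _ (Or.inr (Or.inl rfl))⟩
  · exact hnotmem _ (Or.inr (Or.inr rfl))
  · rw [List.nodup_append]
    exact ⟨hJ, hT, fun a ha b hb hab => hJT a ha (hab ▸ hb)⟩

end ConicColl


namespace ConicColl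

lemma sum_map_range (f : ℕ → ℕ) (n : ℕ) :
    ((List.range n).map f).sum = ∑ i ∈ Finset.range n, f i := by
  induction n with
  | zero => simp
  | succ k ih =>
    rw [List.range_succ, List.map_append, List.sum_append, Finset.sum_range_succ, ih]
    simp

lemma eList_length (m : ℕ) (hm : 3 ≤ m) : 2 * (eList m).length = (m+1)*(m+2) := by
  obtain ⟨n, rfl⟩ : ∃ n, m = n + 3 := ⟨m - 3, by omega⟩
  have h3 : n + 3 - 3 = n := by omega
  rw [eList, chunks, tailL, h3]
  simp only [List.length_cons, List.length_append, List.length_flatten, List.map_cons,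
    List.sum_cons, List.map_map, List.length_flatMap]
  rw [sum_map_range, sum_map_range]
  have hS : (∑ i ∈ Finset.range n, (List.length ∘ fun j => col (n+3) j (rr (n+3) j)) i)
      + (∑ i ∈ Finset.range n, (List.length ∘ fun j => (List.range (rr (n+3) j)).map (fun i => (j, i))) i)
      = ∑ i ∈ Finset.range n, (n + 4 - i) := by
    rw [← Finset.sum_add_distrib]
    apply Finset.sum_congr rfl
    intro i hi
    rw [Finset.mem_range] at hi
    simp only [Function.comp, length_col, List.length_map, List.length_range, rr]
    omega
  have hG : ∑ i ∈ Finset.range n, (n + 4 - i) = 5 * n + ∑ i ∈ Finset.range n, i := by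
    rw [← Finset.sum_range_reflect (fun i => n + 4 - i) n]
    have : ∀ i ∈ Finset.range n, n + 4 - (n - 1 - i) = i + 5 := by
      intro i hi; rw [Finset.mem_range] at hi; omega
    rw [Finset.sum_congr rfl this, Finset.sum_add_distrib, Finset.sum_const, Finset.card_range]
    simp [mul_comm]
    omega
  have h2 : (∑ i ∈ Finset.range n, i) * 2 = n * (n - 1) := Finset.sum_range_id_mul_two n
  have harith : 20 + 10*n + n*(n-1) = (n+3+1)*(n+3+2) := by
    cases n with
    | zero => rfl
    | succ k => simp only [Nat.succ_sub_one]; ring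
  have hc1 : (col (n+3) n 1).length = 3 := by rw [length_col]; omega
  have hc2 : (col (n+3) (n+3-2) 0).length = 3 := by rw [length_col]; omega
  simp only [Function.comp_def] at hS ⊢
  omega

lemma flatten_block {α : Type*} : ∀ (L : List (List α)) (k : ℕ), (∀ l ∈ L, 3 ∣ l.length) →
    3*k+3 ≤ L.flatten.length →
    ∃ l ∈ L, ∃ t, 3*t+3 ≤ l.length ∧ ∀ s, s < 3 → L.flatten[3*k+s]? = l[3*t+s]? := by
  intro L
  induction L with
  | nil => intro k _ h; simp at h
  | cons hd tl ih =>
    intro k hdvd hlen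
    by_cases hc : 3*k+3 ≤ hd.length
    · refine ⟨hd, List.mem_cons_self, k, hc, ?_⟩
      intro s hs
      rw [List.flatten_cons, List.getElem?_append]
      rw [if_pos (by omega)]
    · obtain ⟨q, hq⟩ := hdvd hd (List.mem_cons_self)
      have hlen' : 3*(k-q)+3 ≤ tl.flatten.length := by
        rw [List.flatten_cons, List.length_append] at hlen; omega
      obtain ⟨l, hl, t, ht, hget⟩ := ih (k-q) (fun l hl => hdvd l (List.mem_cons_of_mem _ hl)) hlen'
      refine ⟨l, List.mem_cons_of_mem _ hl, t, ht, ?_⟩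
      intro s hs
      rw [List.flatten_cons, List.getElem?_append_right (by omega)]
      have : 3*k+s - hd.length = 3*(k-q)+s := by omega
      rw [this]
      exact hget s hs

lemma eList_get0 (m : ℕ) : (eList m)[0]? = some (m,0) := rfl
lemma eList_get1 (m : ℕ) : (eList m)[1]? = some (m-1,0) := rfl
lemma eList_get2 (m : ℕ) : (eList m)[2]? = some (m-3,0) := by
  rw [eList, (by norm_num : (2:ℕ) = 1 + 1), List.getElem?_cons_succ,
    (by norm_num : (1:ℕ) = 0 + 1), List.getElem?_cons_succ, List.getElem?_cons_zero]

lemma eList_getElem?_succ3 (m i : ℕ) :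
    (eList m)[3+i]? = ((chunks m).flatten ++ tailL m)[i]? := by
  have : 3 + i = (i + 1 + 1) + 1 := by omega
  rw [this, eList]
  simp [List.getElem?_cons_succ]

lemma mem_chunks_col {m : ℕ} {l : List (ℕ×ℕ)} (hl : l ∈ chunks m) : ∃ j a, l = col m j a := by
  simp only [chunks, List.mem_cons, List.mem_map, List.mem_range] at hl
  rcases hl with rfl | rfl | ⟨j, hj, rfl⟩
  · exact ⟨_, _, rfl⟩
  · exact ⟨_, _, rfl⟩
  · exact ⟨_, _, rfl⟩

lemma block_struct (m k : ℕ) (hm : 3 ≤ m) :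
    (∃ j, ∀ s, s < 3 → ∀ x : ℕ×ℕ, (eList m)[3+3*k+s]? = some x → x.1 = j) ∨
    (∀ s, s < 3 → ∀ x : ℕ×ℕ, (eList m)[3+3*k+s]? = some x → x.2 ≤ 1) := by
  have hdvd := chunks_dvd m hm
  by_cases hc : 3*k+3 ≤ (chunks m).flatten.length
  · left
    obtain ⟨l, hl, t, ht, hget⟩ := flatten_block (chunks m) k hdvd hc
    obtain ⟨j, a, rfl⟩ := mem_chunks_col hl
    refine ⟨j, ?_⟩
    intro s hs x hx
    rw [(by omega : 3+3*k+s = 3+(3*k+s)), eList_getElem?_succ3,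
      List.getElem?_append, if_pos (by omega), hget s hs] at hx
    have hmem : x ∈ col m j a := by
      obtain ⟨h, rfl⟩ := List.getElem?_eq_some_iff.1 hx
      exact List.getElem_mem h
    exact (mem_col hmem).1
  · right
    have h3 : 3 ∣ (chunks m).flatten.length := by
      rw [List.length_flatten]
      apply List.dvd_sum
      intro y hy
      obtain ⟨l, hl, rfl⟩ := List.mem_map.1 hy
      exact hdvd l hl
    have hle : (chunks m).flatten.length ≤ 3*k := by obtain ⟨q, hq⟩ := h3; omega
    intro s hs x hx
    rw [(by omega : 3+3*k+s = 3+(3*k+s)), eList_getElem?_succ3,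
      List.getElem?_append_right (by omega)] at hx
    have hmem : x ∈ tailL m := by
      obtain ⟨h, rfl⟩ := List.getElem?_eq_some_iff.1 hx
      exact List.getElem_mem h
    rcases mem_tailL hmem with heq | h'
    · rw [heq]
    · have := rr_le m x.1
      omega

end ConicColl

section Helpers

open MvPolynomial

variable {K : Type*} [Field K] [CharZero K]

namespace ConicColl

lemma homog_eval_smul {n : ℕ} {F : MvPolynomial (Fin 3) K} (h : F.IsHomogeneous n)
    (t : K) (w : Fin 3 → K) : eval (t • w) F = t ^ n * eval w F := by
  rw [eval_eq', eval_eq', Finset.mul_sum]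
  apply Finset.sum_congr rfl
  intro d hd
  have hdeg : ∑ i, d i = n := by
    have h1 : d.degree = n := by
      by_contra hne
      exact (mem_support_iff.1 hd) (h.coeff_eq_zero hne)
    rw [← h1, Finsupp.degree]
    exact (Finset.sum_subset (Finset.subset_univ _)
      (fun x _ hx => Finsupp.notMem_support_iff.1 hx)).symm
  have he : ∏ i, (t • w) i ^ d i = t ^ n * ∏ i, w i ^ d i := by
    simp only [Pi.smul_apply, smul_eq_mul, mul_pow]
    rw [Finset.prod_mul_distrib, Finset.prod_pow_eq_pow_sum, hdeg]
  rw [he]; ring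

noncomputable def Pp (a b : ℕ) : Projectivization K (Fin 3 → K) :=
  Projectivization.mk K ![1, (a:K), (b:K)] (by
    intro h
    have := congrFun h 0
    simp at this)

lemma Pp_rep (a b : ℕ) :
    ∃ t : K, t ≠ 0 ∧ (Pp a b : Projectivization K (Fin 3 → K)).rep = t • ![1,(a:K),b] := by
  obtain ⟨u, hu⟩ := Projectivization.exists_smul_eq_mk_rep K ![1,(a:K),b] (by
    intro h; have := congrFun h 0; simp at this)
  refine ⟨u, u.ne_zero, ?_⟩
  rw [Pp, ← hu, Units.smul_def]

lemma Pp_inj {a b a' b' : ℕ} (h : (Pp a b : Projectivization K (Fin 3 → K)) = Pp a' b') :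
    a = a' ∧ b = b' := by
  rw [Pp, Pp, Projectivization.mk_eq_mk_iff] at h
  obtain ⟨u, hu⟩ := h
  have h0 := congrFun hu 0
  have h1 := congrFun hu 1
  have h2 := congrFun hu 2
  simp [Pi.smul_apply, Units.smul_def, smul_eq_mul] at h0 h1 h2
  rw [h0] at h1 h2
  simp at h1 h2
  exact ⟨Nat.cast_injective h1.symm, Nat.cast_injective h2.symm⟩

noncomputable def Pp2 (p : ℕ × ℕ) : Projectivization K (Fin 3 → K) := Pp p.1 p.2

lemma Pp2_def (p : ℕ × ℕ) : (Pp2 p : Projectivization K (Fin 3 → K)) = Pp p.1 p.2 := rfl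

lemma Pp2_inj : Function.Injective (Pp2 (K := K)) := by
  intro p q h
  rw [Pp2_def, Pp2_def] at h
  obtain ⟨h1, h2⟩ := Pp_inj h
  exact Prod.ext h1 h2

noncomputable def mySep (m : ℕ) (p : ℕ × ℕ) : MvPolynomial (Fin 3) K :=
  (∏ a ∈ Finset.range p.1, (X 1 - C (a:K) * X 0)) *
  (∏ b ∈ Finset.range p.2, (X 2 - C (b:K) * X 0)) *
  (∏ d ∈ Finset.Ico (p.1+p.2) m, (X 1 + X 2 - C ((d:K)+1) * X 0))

lemma mySep_homog (m : ℕ) (p : ℕ × ℕ) (hp : p.1 + p.2 ≤ m) :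
    (mySep m p : MvPolynomial (Fin 3) K).IsHomogeneous m := by
  have h1 : (∏ a ∈ Finset.range p.1, (X (1:Fin 3) - C (a:K) * X 0)).IsHomogeneous p.1 := by
    have := MvPolynomial.IsHomogeneous.prod (Finset.range p.1)
      (fun a => (X 1 - C (a:K) * X 0 : MvPolynomial (Fin 3) K)) (fun _ => 1) (fun a _ =>
        ((isHomogeneous_X K 1).sub (by
          simpa using (isHomogeneous_C (Fin 3) ((a:K))).mul (isHomogeneous_X K (0 : Fin 3)))))
    simpa using this
  have h2 : (∏ b ∈ Finset.range p.2, (X (2:Fin 3) - C (b:K) * X 0)).IsHomogeneous p.2 := by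
    have := MvPolynomial.IsHomogeneous.prod (Finset.range p.2)
      (fun b => (X 2 - C (b:K) * X 0 : MvPolynomial (Fin 3) K)) (fun _ => 1) (fun b _ =>
        ((isHomogeneous_X K 2).sub (by
          simpa using (isHomogeneous_C (Fin 3) ((b:K))).mul (isHomogeneous_X K (0 : Fin 3)))))
    simpa using this
  have h3 : (∏ d ∈ Finset.Ico (p.1+p.2) m,
      (X (1:Fin 3) + X 2 - C ((d:K)+1) * X 0)).IsHomogeneous (m - (p.1+p.2)) := by
    have := MvPolynomial.IsHomogeneous.prod (Finset.Ico (p.1+p.2) m)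
      (fun d => (X 1 + X 2 - C ((d:K)+1) * X 0 : MvPolynomial (Fin 3) K)) (fun _ => 1) (fun d _ =>
        (((isHomogeneous_X K 1).add (isHomogeneous_X K 2)).sub
          (by simpa using (isHomogeneous_C (Fin 3) ((d:K)+1)).mul (isHomogeneous_X K (0 : Fin 3)))))
    simpa [Nat.card_Ico] using this
  have := (h1.mul h2).mul h3
  convert this using 1
  · rfl
  obtain ⟨p1, p2⟩ := p
  dsimp only at hp ⊢
  omega

lemma mySep_eval (m : ℕ) (p : ℕ × ℕ) (a b : ℕ) :
    eval ![1,(a:K),(b:K)] (mySep m p) =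
      (∏ x ∈ Finset.range p.1, ((a:K) - x)) * (∏ x ∈ Finset.range p.2, ((b:K) - x)) *
      (∏ d ∈ Finset.Ico (p.1+p.2) m, ((a:K) + b - (d+1))) := by
  simp [mySep, map_prod]

lemma mySep_eval_self (m : ℕ) (a b : ℕ) (h : a + b ≤ m) :
    eval ![1,(a:K),(b:K)] (mySep m (a,b)) ≠ 0 := by
  rw [mySep_eval]
  apply mul_ne_zero
  apply mul_ne_zero
  · rw [Finset.prod_ne_zero_iff]
    intro x hx
    rw [Finset.mem_range] at hx
    have : (x:K) ≠ a := by exact_mod_cast Nat.ne_of_lt hx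
    intro hc; rw [sub_eq_zero] at hc; exact this hc.symm
  · rw [Finset.prod_ne_zero_iff]
    intro x hx
    rw [Finset.mem_range] at hx
    have : (x:K) ≠ b := by exact_mod_cast Nat.ne_of_lt hx
    intro hc; rw [sub_eq_zero] at hc; exact this hc.symm
  · rw [Finset.prod_ne_zero_iff]
    intro d hd
    rw [Finset.mem_Ico] at hd
    intro hc; rw [sub_eq_zero] at hc
    have hc' : (a:K) + b = ((d:K) + 1) := hc
    have hnat : a + b = d + 1 := by exact_mod_cast hc'
    omega

lemma mySep_eval_other (m : ℕ) (p : ℕ × ℕ) (a b : ℕ) (h : a + b ≤ m) (hne : (a,b) ≠ p) :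
    eval ![1,(a:K),(b:K)] (mySep m p) = 0 := by
  rw [mySep_eval]
  rcases Nat.lt_or_ge a p.1 with hlt | hge1
  · apply mul_eq_zero_of_left; apply mul_eq_zero_of_left
    exact Finset.prod_eq_zero (Finset.mem_range.2 hlt) (by simp)
  rcases Nat.lt_or_ge b p.2 with hlt | hge2
  · apply mul_eq_zero_of_left; apply mul_eq_zero_of_right
    exact Finset.prod_eq_zero (Finset.mem_range.2 hlt) (by simp)
  have hsum : p.1 + p.2 < a + b := by
    rcases Nat.lt_or_ge p.1 a with h1 | h1
    · omega
    · have ha : a = p.1 := by omega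
      have : b ≠ p.2 := by
        intro hb; apply hne; rw [Prod.ext_iff]; exact ⟨ha, hb⟩
      omega
  apply mul_eq_zero_of_right
  apply Finset.prod_eq_zero (i := a + b - 1) (Finset.mem_Ico.2 ⟨by omega, by omega⟩)
  have he : ((a + b - 1 : ℕ) : K) + 1 = (a:K) + b := by
    have h1 : (a + b - 1 : ℕ) + 1 = a + b := by omega
    calc ((a + b - 1 : ℕ) : K) + 1 = (((a+b-1)+1 : ℕ) : K) := by push_cast; ring
    _ = ((a + b : ℕ) : K) := by rw [h1]
    _ = (a:K) + b := by push_cast; ring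
  rw [he]; ring_nf

end ConicColl
end Helpers

section Assemble

open MvPolynomial

variable {K : Type*} [Field K] [CharZero K]

namespace ConicColl

lemma vanish_transfer {n : ℕ} {F : MvPolynomial (Fin 3) K} (hF : F.IsHomogeneous n)
    {a b : ℕ} (h : eval ![1,(a:K),(b:K)] F = 0) : PVanishes F (Pp a b) := by
  obtain ⟨t, ht, hrep⟩ := Pp_rep (K := K) a b
  unfold PVanishes
  rw [hrep, homog_eval_smul hF, h, mul_zero]

lemma assemble (m c N : ℕ) (l : List (ℕ×ℕ)) (hnd : l.Nodup)
    (hgrid : ∀ p ∈ l, p.1 + p.2 ≤ m) (hlen : N ≤ l.length) (hN : 3*c+3 ≤ N)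
    (hblock : ∀ k : ℕ, k < c → ∃ F : MvPolynomial (Fin 3) K, F ≠ 0 ∧ F.IsHomogeneous 2 ∧
      ∀ i : ℕ, (i < 3 ∨ (3+3*k ≤ i ∧ i < 3+3*k+3)) → ∀ x : ℕ×ℕ, l[i]? = some x →
        eval ![1,(x.1:K),(x.2:K)] F = 0) :
    ∃ S : Finset (Projectivization K (Fin 3 → K)), S.card = N ∧
      (∃ f : Fin (3*c+3) → Projectivization K (Fin 3 → K),
        IsConicCollection c f ∧ ∀ i, f i ∈ S) ∧
      ImposesIndependentConditions m S := by
  classical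
  have htknd : (l.take N).Nodup := (List.take_sublist _ _).nodup hnd
  have htklen : (l.take N).length = N := by rw [List.length_take]; omega
  refine ⟨((l.take N).map Pp2).toFinset, ?_, ?_, ?_⟩
  · rw [List.toFinset_card_of_nodup (htknd.map Pp2_inj), List.length_map, htklen]
  · refine ⟨fun idx => Pp2 (l.getD idx (0,0)), ⟨?_, ?_⟩, ?_⟩
    · -- injectivity
      intro i j hij
      have hi : (i:ℕ) < l.length := by have := i.isLt; omega
      have hj : (j:ℕ) < l.length := by have := j.isLt; omega
      simp only [List.getD_eq_getElem _ _ hi, List.getD_eq_getElem _ _ hj] at hij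
      have := Pp2_inj hij
      exact Fin.ext ((hnd.getElem_inj_iff (hi := hi) (hj := hj)).1 this)
    · -- conic collection
      intro k
      obtain ⟨F, hF0, hFh, hFv⟩ := hblock k k.isLt
      have hvan : ∀ i : ℕ, (i < 3 ∨ (3+3*(k:ℕ) ≤ i ∧ i < 3+3*(k:ℕ)+3)) →
          PVanishes F (Pp2 (l.getD i (0,0))) := by
        intro i hcases
        have hi : i < l.length := by
          have := k.isLt
          rcases hcases with h | h <;> omega
        rw [List.getD_eq_getElem _ _ hi, Pp2_def]
        apply vanish_transfer hFh
        exact hFv i hcases _ (List.getElem?_eq_getElem hi)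
      refine ⟨F, hF0, hFh, hvan 0 (by omega), hvan 1 (by omega), hvan 2 (by omega), ?_⟩
      intro i
      exact hvan (3 + 3*(k:ℕ) + (i:ℕ)) (by have := i.isLt; omega)
    · -- membership
      intro i
      have hi : (i:ℕ) < N := by have := i.isLt; omega
      have hil : (i:ℕ) < l.length := by omega
      have hit : (i:ℕ) < (l.take N).length := by omega
      rw [List.mem_toFinset]
      have he : l.getD (i:ℕ) (0,0) = (l.take N)[(i:ℕ)] := by
        rw [List.getD_eq_getElem _ _ hil, List.getElem_take]
      show Pp2 (l.getD (i:ℕ) (0,0)) ∈ List.map Pp2 (List.take N l)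
      rw [he]
      exact List.mem_map_of_mem (f := Pp2) (List.getElem_mem hit)
  · -- independence
    intro v
    have hsub : ∀ p ∈ (l.take N).toFinset, p.1 + p.2 ≤ m := by
      intro p hp
      exact hgrid p ((List.take_sublist _ _).subset (List.mem_toFinset.1 hp))
    refine ⟨∑ p ∈ (l.take N).toFinset,
        C (v (Pp2 p) * (eval (Pp2 p).rep (mySep m p))⁻¹) * mySep m p, ?_, ?_⟩
    · apply MvPolynomial.IsHomogeneous.sum
      intro p hp
      have := (isHomogeneous_C (Fin 3)
        (v (Pp2 p) * (eval (Pp2 p).rep (mySep m p))⁻¹)).mul (mySep_homog m p (hsub p hp))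
      simpa using this
    · intro x hx
      rw [List.mem_toFinset, List.mem_map] at hx
      obtain ⟨p₀, hp₀, rfl⟩ := hx
      have hp₀T : p₀ ∈ (l.take N).toFinset := List.mem_toFinset.2 hp₀
      have hp₀g : p₀.1 + p₀.2 ≤ m := hsub p₀ hp₀T
      obtain ⟨t, ht, hrep⟩ := Pp_rep (K := K) p₀.1 p₀.2
      rw [map_sum]
      rw [Finset.sum_eq_single_of_mem p₀ hp₀T]
      · rw [map_mul, eval_C]
        have hE : eval (Pp2 p₀).rep (mySep m p₀ : MvPolynomial (Fin 3) K) ≠ 0 := by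
          rw [Pp2_def, hrep, homog_eval_smul (mySep_homog m p₀ hp₀g)]
          apply mul_ne_zero (pow_ne_zero _ ht)
          have := mySep_eval_self (K := K) m p₀.1 p₀.2 hp₀g
          simpa using this
        rw [mul_assoc, inv_mul_cancel₀ hE, mul_one]
      · intro p hp hne
        rw [map_mul, eval_C]
        have hpg : p.1 + p.2 ≤ m := hsub p hp
        have hz : eval (Pp2 p₀).rep (mySep m p : MvPolynomial (Fin 3) K) = 0 := by
          rw [Pp2_def, hrep, homog_eval_smul (mySep_homog m p hpg)]
          have := mySep_eval_other (K := K) m p p₀.1 p₀.2 hp₀g (by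
            intro hc
            apply hne
            rw [← hc])
          rw [this, mul_zero]
        rw [hz, mul_zero]

end ConicColl
end Assemble


open ConicColl MvPolynomial in
/-- Let `m ≥ 1`, `c ≥ 0`, and `N` be integers with `N ≥ 3c + 3`, `N ≤ C(m+2, 2)`, and
`(N, c, m) ≠ (6, 1, 2)`. Then there exists a set `S` of exactly `N` distinct points of
`ℙ²` containing a conic collection of `3c + 3` points, such that `S` imposes
independent conditions on forms of degree `m`. -/
theorem exists_points_with_conic_collection_independent_conditions
    {K : Type*} [Field K] [IsAlgClosed K] [CharZero K]
    (m c N : ℕ) (hm : 1 ≤ m) (hN3 : 3 * c + 3 ≤ N)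
    (hNm : N ≤ Nat.choose (m + 2) 2) (hexc : ¬(N = 6 ∧ c = 1 ∧ m = 2)) :
    ∃ S : Finset (Projectivization K (Fin 3 → K)), S.card = N ∧
      (∃ f : Fin (3 * c + 3) → Projectivization K (Fin 3 → K),
        IsConicCollection c f ∧ ∀ i, f i ∈ S) ∧
      ImposesIndependentConditions m S := by
  classical
  have hchoose : Nat.choose (m+2) 2 = (m+2)*(m+1)/2 := by
    rw [Nat.choose_two_right]
    congr 1
  by_cases hm3 : 3 ≤ m
  · -- main construction
    have hlen : N ≤ (ConicColl.eList m).length := by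
      have h2l := ConicColl.eList_length m hm3
      rw [mul_comm (m+1) (m+2)] at h2l
      rw [hchoose] at hNm
      omega
    apply ConicColl.assemble m c N (ConicColl.eList m) (ConicColl.eList_nodup m hm3)
      (fun p hp => ConicColl.mem_eList_grid hm3 hp) hlen hN3
    intro k hk
    rcases ConicColl.block_struct m k hm3 with ⟨j, hj⟩ | htail
    · refine ⟨X 2 * (X 1 - C (j:K) * X 0), ?_, ?_, ?_⟩
      · apply mul_ne_zero (MvPolynomial.X_ne_zero _)
        intro hzero
        have := congrArg (MvPolynomial.eval (![0,1,0] : Fin 3 → K)) hzero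
        simp at this
      · have := (isHomogeneous_X K (2 : Fin 3)).mul
          ((isHomogeneous_X K (1 : Fin 3)).sub
            (by simpa using (isHomogeneous_C (Fin 3) ((j:K))).mul (isHomogeneous_X K (0 : Fin 3))))
        simpa using this
      · intro i hcases x hx
        have heval : eval ![1,(x.1:K),(x.2:K)] (X 2 * (X 1 - C (j:K) * X 0)) =
            (x.2:K) * ((x.1:K) - j) := by
          simp
        rw [heval]
        rcases hcases with hi3 | hiblk
        · -- q points, second coordinate 0
          interval_cases i
          · rw [ConicColl.eList_get0] at hx
            have : x = (m, 0) := by injection hx with h; exact h.symm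
            rw [this]; simp
          · rw [ConicColl.eList_get1] at hx
            have : x = (m-1, 0) := by injection hx with h; exact h.symm
            rw [this]; simp
          · rw [ConicColl.eList_get2] at hx
            have : x = (m-3, 0) := by injection hx with h; exact h.symm
            rw [this]; simp
        · have hfst : x.1 = j := by
            apply hj (i - (3+3*k)) (by omega) x
            rw [(by omega : 3+3*k+(i-(3+3*k)) = i)]
            exact hx
          rw [hfst]
          simp
    · refine ⟨X 2 * (X 2 - X 0), ?_, ?_, ?_⟩
      · apply mul_ne_zero (MvPolynomial.X_ne_zero _)
        intro hzero
        have := congrArg (MvPolynomial.eval (![0,1,2] : Fin 3 → K)) hzero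
        simp at this
      · have := (isHomogeneous_X K (2 : Fin 3)).mul
          ((isHomogeneous_X K (2 : Fin 3)).sub (isHomogeneous_X K (0 : Fin 3)))
        simpa using this
      · intro i hcases x hx
        have heval : eval ![1,(x.1:K),(x.2:K)] (X 2 * (X 2 - X 0) : MvPolynomial (Fin 3) K) =
            (x.2:K) * ((x.2:K) - 1) := by
          simp
        rw [heval]
        rcases hcases with hi3 | hiblk
        · interval_cases i
          · rw [ConicColl.eList_get0] at hx
            have : x = (m, 0) := by injection hx with h; exact h.symm
            rw [this]; simp
          · rw [ConicColl.eList_get1] at hx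
            have : x = (m-1, 0) := by injection hx with h; exact h.symm
            rw [this]; simp
          · rw [ConicColl.eList_get2] at hx
            have : x = (m-3, 0) := by injection hx with h; exact h.symm
            rw [this]; simp
        · have hsnd : x.2 ≤ 1 := by
            apply htail (i - (3+3*k)) (by omega) x
            rw [(by omega : 3+3*k+(i-(3+3*k)) = i)]
            exact hx
          interval_cases h2 : x.2
          · simp
          · simp
  · -- m = 1 or m = 2, so c = 0
    have hm12 : m = 1 ∨ m = 2 := by omega
    have hc0 : c = 0 := by
      rcases hm12 with rfl | rfl
      · have : Nat.choose 3 2 = 3 := by decide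
        omega
      · have h6 : Nat.choose 4 2 = 6 := by decide
        by_contra hc
        have hc1 : c = 1 := by omega
        have hN6 : N = 6 := by omega
        exact hexc ⟨hN6, hc1, rfl⟩
    subst hc0
    rcases hm12 with rfl | rfl
    · apply ConicColl.assemble 1 0 N [(0,0),(1,0),(0,1)] (by decide) (by decide)
        (by have h3 : Nat.choose (1+2) 2 = 3 := (by decide); show N ≤ 3; omega) hN3
      intro k hk
      omega
    · apply ConicColl.assemble 2 0 N [(0,0),(1,0),(2,0),(0,1),(1,1),(0,2)] (by decide) (by decide)
        (by have h6 : Nat.choose (2+2) 2 = 6 := (by decide); show N ≤ 6; omega) hN3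
      intro k hk
      omega
end

section
/- Let d, r, m be integers with r ≥ 4, m ≥ 3, d ≥ 2r + 2, and d ≥ C(m+r−1, m). Then there exist positive integers d₁ and d₂ with d = d₁ + d₂ such that d₁ ≥ C(m+r−2, m−1), d₂ ≥ C(m+r−2, m), r·d₁ ≥ r(r−1) + d (i.e., d₁ ≥ r − 1 + d/r), and d₂ ≥ r − 1. Moreover, if m = 3, then d₁ and d₂ can be chosen so that in addition 2r·d₂ ≥ (r−1)·d. -/
/-- Let `d, r, m` be integers with `r ≥ 4`, `m ≥ 3`, `d ≥ 2r + 2`, and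
`d ≥ C(m+r−1, m)`. Then there are positive integers `d₁, d₂` with `d = d₁ + d₂`,
`d₁ ≥ C(m+r−2, m−1)`, `d₂ ≥ C(m+r−2, m)`, `r·d₁ ≥ r(r−1) + d` (i.e. `d₁ ≥ r−1+d/r`),
and `d₂ ≥ r − 1`; moreover if `m = 3` they can be chosen so that in addition
`2r·d₂ ≥ (r−1)·d`. -/
theorem exists_degree_split_ge (d r m : ℕ) (hr : 4 ≤ r) (hm : 3 ≤ m)
    (hd : 2 * r + 2 ≤ d) (hdC : Nat.choose (m + r - 1) m ≤ d) :
    ∃ d₁ d₂ : ℕ, 0 < d₁ ∧ 0 < d₂ ∧ d = d₁ + d₂ ∧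
      Nat.choose (m + r - 2) (m - 1) ≤ d₁ ∧ Nat.choose (m + r - 2) m ≤ d₂ ∧
      r * (r - 1) + d ≤ r * d₁ ∧ r - 1 ≤ d₂ ∧
      (m = 3 → (r - 1) * d ≤ 2 * r * d₂) := by
  obtain ⟨k, rfl⟩ : ∃ k, m = k + 3 := ⟨m - 3, by omega⟩
  obtain ⟨t, rfl⟩ : ∃ t, r = t + 4 := ⟨r - 4, by omega⟩
  have e1 : k + 3 + (t + 4) - 1 = k + t + 6 := by omega
  have e2 : k + 3 + (t + 4) - 2 = k + t + 5 := by omega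
  have e3 : k + 3 - 1 = k + 2 := by omega
  have e4 : t + 4 - 1 = t + 3 := by omega
  rw [e1] at hdC
  rw [e2, e3, e4]
  set C₁ := Nat.choose (k + t + 5) (k + 2) with hC1
  set C₂ := Nat.choose (k + t + 5) (k + 3) with hC2
  -- Pascal
  have hpascal : Nat.choose (k + t + 6) (k + 3) = C₁ + C₂ := by
    have := Nat.choose_succ_succ' (k + t + 5) (k + 2)
    simpa [show k+t+5+1 = k+t+6 by omega, show k+2+1 = k+3 by omega] using this
  rw [hpascal] at hdC
  -- identity (k+3) C₂ = (t+3) C₁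
  have h1 : C₂ * (k + 3) = C₁ * (t + 3) := by
    have := Nat.choose_succ_right_eq (k + t + 5) (k + 2)
    simpa [show k+2+1 = k+3 by omega, show k + t + 5 - (k+2) = t + 3 by omega] using this
  -- C₂ ≥ C(t+5,3) ≥ C(t+5,2), with 2*C(t+5,2) = (t+5)*(t+4)
  have hsym : C₂ = Nat.choose (k + t + 5) (t + 2) := by
    have := Nat.choose_symm (show k + 3 ≤ k + t + 5 by omega)
    rw [show k + t + 5 - (k + 3) = t + 2 by omega] at this
    exact this.symm
  have hmono : Nat.choose (t + 5) (t + 2) ≤ C₂ := by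
    rw [hsym]; exact Nat.choose_le_choose _ (by omega)
  have hsym2 : Nat.choose (t + 5) (t + 2) = Nat.choose (t + 5) 3 := by
    have := Nat.choose_symm (show t + 2 ≤ t + 5 by omega)
    rw [show t + 5 - (t + 2) = 3 by omega] at this
    exact this.symm
  have h2v : Nat.choose (t + 5) 2 * 2 = (t + 5) * (t + 4) := by
    have h := Nat.choose_succ_right_eq (t + 5) 1
    simpa [Nat.choose_one_right, show t + 5 - 1 = t + 4 by omega] using h
  have h32 : Nat.choose (t + 5) 2 ≤ Nat.choose (t + 5) 3 := by
    have h := Nat.choose_succ_right_eq (t + 5) 2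
    have h' : Nat.choose (t+5) 3 * 3 = Nat.choose (t+5) 2 * (t + 3) := by
      simpa [show t + 5 - 2 = t + 3 by omega] using h
    have h'' : Nat.choose (t+5) 2 * 3 ≤ Nat.choose (t+5) 2 * (t + 3) :=
      Nat.mul_le_mul_left _ (by omega)
    omega
  have h2 : (t + 5) * (t + 4) ≤ 2 * C₂ := by
    have : Nat.choose (t + 5) 2 ≤ C₂ := by
      rw [hsym2] at hmono; exact le_trans h32 hmono
    omega
  have hC2pos : 0 < C₂ := Nat.choose_pos (by omega)
  have hC1pos : 0 < C₁ := Nat.choose_pos (by omega)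
  clear_value C₁ C₂
  clear hpascal hsym hmono hsym2 h2v h32
  -- ceiling division
  set q := (d + t + 3) / (t + 4) with hqdef
  have hdm := Nat.div_add_mod (d + t + 3) (t + 4)
  rw [← hqdef] at hdm
  have hmod : (d + t + 3) % (t + 4) < t + 4 := Nat.mod_lt _ (by omega)
  have hq1 : d ≤ (t + 4) * q := by linarith [hdm, hmod]
  have hq2 : (t + 4) * q ≤ d + t + 3 := by linarith [hdm, Nat.zero_le ((d + t + 3) % (t + 4))]
  clear_value q
  -- B + C₂ ≤ d where B = t + 3 + q
  have hBd : t + 3 + q + C₂ ≤ d := by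
    have hx : (t + 3) * (C₁ + C₂) ≤ (t + 3) * d := Nat.mul_le_mul_left _ hdC
    have hmul : (t + 4) * (t + 3 + q + C₂) ≤ (t + 4) * d := by
      linarith [hq2, h2, hx, h1, Nat.zero_le (k * C₂)]
    exact Nat.le_of_mul_le_mul_left hmul (by omega)
  set M := max C₁ (t + 3 + q) with hM
  have hMd : M + C₂ ≤ d := by
    rcases max_cases C₁ (t + 3 + q) with ⟨he, _⟩ | ⟨he, _⟩ <;> rw [hM, he] <;> omega
  refine ⟨M, d - M, ?_, by omega, by omega, le_max_left _ _, by omega, ?_, ?_, ?_⟩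
  · exact lt_of_lt_of_le hC1pos (le_max_left _ _)
  · -- (t+4)*(t+3) + d ≤ (t+4)*M
    have hBM : (t + 4) * (t + 3 + q) ≤ (t + 4) * M :=
      Nat.mul_le_mul_left _ (le_max_right _ _)
    linarith [hBM, hq1]
  · -- t+3 ≤ d - M
    have : 2 * (t + 3) ≤ (t + 5) * (t + 4) := by nlinarith []
    omega
  · intro h3
    have hk0 : k = 0 := by omega
    subst hk0
    -- 2*C₁ = (t+5)*(t+4)
    have hC1v : C₁ * 2 = (t + 5) * (t + 4) := by
      have h := Nat.choose_succ_right_eq (t + 5) 1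
      rw [hC1]
      simpa [Nat.choose_one_right, show t + 5 - 1 = t + 4 by omega] using h
    -- d ≥ (t+4)^2
    have hd2 : ((t : ℤ) + 4) * ((t : ℤ) + 4) ≤ (d : ℤ) := by
      have hdC' : (C₁ : ℤ) + (C₂ : ℤ) ≤ d := by exact_mod_cast hdC
      have h1' : (C₂ : ℤ) * 3 = (C₁ : ℤ) * ((t : ℤ) + 3) := by exact_mod_cast h1
      have hC1v' : (C₁ : ℤ) * 2 = ((t : ℤ) + 5) * ((t : ℤ) + 4) := by exact_mod_cast hC1v
      have h6 : (t : ℤ) * ((C₁ : ℤ) * 2) = (t : ℤ) * (((t : ℤ) + 5) * ((t : ℤ) + 4)) := by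
        linear_combination (t : ℤ) * hC1v'
      have h7 : (0 : ℤ) ≤ ((t : ℤ) + 4) * ((t : ℤ) * (t : ℤ) + 5 * (t : ℤ) + 6) := by positivity
      linarith [hdC', h1', hC1v', h6, h7]
    have hMle : M ≤ d := by omega
    rcases max_cases C₁ (t + 3 + q) with ⟨he, hge⟩ | ⟨he, hlt⟩ <;> rw [hM, he]
    · -- M = C₁
      zify [show C₁ ≤ d by omega]
      have hC1v' : (C₁ : ℤ) * 2 = ((t : ℤ) + 5) * ((t : ℤ) + 4) := by exact_mod_cast hC1v
      have h6 : ((t : ℤ) + 4) * ((C₁ : ℤ) * 2) = ((t : ℤ) + 4) * (((t : ℤ) + 5) * ((t : ℤ) + 4)) := by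
        linear_combination ((t : ℤ) + 4) * hC1v'
      have h5 : (0 : ℤ) ≤ ((t : ℤ) + 5) * ((d : ℤ) - ((t : ℤ) + 4) * ((t : ℤ) + 4)) :=
        mul_nonneg (by positivity) (by linarith [hd2])
      linarith [h5, h6]
    · -- M = B
      zify [show t + 3 + q ≤ d by omega]
      have hq2' : ((t : ℤ) + 4) * (q : ℤ) ≤ (d : ℤ) + (t : ℤ) + 3 := by exact_mod_cast hq2
      have hd' : 2 * ((t : ℤ) + 4) + 2 ≤ (d : ℤ) := by exact_mod_cast hd
      have h8 : (0 : ℤ) ≤ ((t : ℤ) + 3) * ((d : ℤ) - 2 * (t : ℤ) - 10) :=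
        mul_nonneg (by positivity) (by linarith)
      linarith [h8, hq2']
end

section
/- Let d, r, m be integers with r ≥ 4, m ≥ 3, d ≥ 2r + 2, and d ≤ C(m+r−1, m). Then there exist positive integers d₁ and d₂ with d = d₁ + d₂ such that d₁ ≤ C(m+r−2, m−1), d₂ ≤ C(m+r−2, m), r·d₁ ≥ r(r−1) + d (i.e., d₁ ≥ r − 1 + d/r), and d₂ ≥ r − 1. Moreover, if m = 3, then d₁ and d₂ can be chosen so that in addition 2r·d₂ ≥ (r−1)·d. -/
/-- Let `d, r, m` be integers with `r ≥ 4`, `m ≥ 3`, `d ≥ 2r + 2`, and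
`d ≤ C(m+r−1, m)`. Then there are positive integers `d₁, d₂` with `d = d₁ + d₂`,
`d₁ ≤ C(m+r−2, m−1)`, `d₂ ≤ C(m+r−2, m)`, `r·d₁ ≥ r(r−1) + d` (i.e. `d₁ ≥ r−1+d/r`),
and `d₂ ≥ r − 1`; moreover if `m = 3` they can be chosen so that in addition
`2r·d₂ ≥ (r−1)·d`. -/
theorem exists_degree_split_le (d r m : ℕ) (hr : 4 ≤ r) (hm : 3 ≤ m)
    (hd : 2 * r + 2 ≤ d) (hdC : d ≤ Nat.choose (m + r - 1) m) :
    ∃ d₁ d₂ : ℕ, 0 < d₁ ∧ 0 < d₂ ∧ d = d₁ + d₂ ∧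
      d₁ ≤ Nat.choose (m + r - 2) (m - 1) ∧ d₂ ≤ Nat.choose (m + r - 2) m ∧
      r * (r - 1) + d ≤ r * d₁ ∧ r - 1 ≤ d₂ ∧
      (m = 3 → (r - 1) * d ≤ 2 * r * d₂) := by
  obtain ⟨k, rfl⟩ : ∃ k, m = k + 3 := ⟨m - 3, by omega⟩
  obtain ⟨s, rfl⟩ : ∃ s, r = s + 4 := ⟨r - 4, by omega⟩
  have hm2 : k + 3 + (s + 4) - 2 = k + s + 5 := by omega
  have hm1 : k + 3 - 1 = k + 2 := by omega
  have hm0 : k + 3 + (s + 4) - 1 = (k + s + 5) + 1 := by omega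
  have hm4 : s + 4 - 1 = s + 3 := by omega
  rw [hm2, hm1, hm4]
  rw [hm0] at hdC
  set C1 := (k + s + 5).choose (k + 2) with hC1
  set C2 := (k + s + 5).choose (k + 3) with hC2
  -- Pascal
  have hpascal : ((k + s + 5) + 1).choose (k + 3) = C1 + C2 := by
    have := Nat.choose_succ_succ (k + s + 5) (k + 2)
    simpa using this
  rw [hpascal] at hdC
  -- identity : C2 * (k+3) = C1 * (s+3)
  have hid : C2 * (k + 3) = C1 * (s + 3) := by
    have h := Nat.choose_succ_right_eq (k + s + 5) (k + 2)
    have h' : k + s + 5 - (k + 2) = s + 3 := by omega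
    rw [h'] at h
    simpa using h
  -- lower bound on C2
  have hTle : (s + 5).choose 3 ≤ C2 := by
    have h1 : (s + 5).choose (s + 2) ≤ (k + s + 5).choose (s + 2) :=
      Nat.choose_le_choose _ (by omega)
    have h2 : (k + s + 5).choose (s + 2) = C2 := by
      have h := Nat.choose_symm (n := k + s + 5) (k := k + 3) (by omega)
      have h' : k + s + 5 - (k + 3) = s + 2 := by omega
      rw [h'] at h
      simpa using h
    have h3 : (s + 5).choose (s + 2) = (s + 5).choose 3 := by
      have h := Nat.choose_symm (n := s + 5) (k := 3) (by omega)
      have h' : s + 5 - 3 = s + 2 := by omega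
      rw [h'] at h
      simpa using h
    omega
  have hTval : (s + 5).choose 3 * 6 = (s + 5) * (s + 4) * (s + 3) := by
    have h3 : (s + 5).choose 3 * 3 = (s + 5).choose 2 * (s + 3) := by
      have h := Nat.choose_succ_right_eq (s + 5) 2
      have h' : s + 5 - 2 = s + 3 := by omega
      rw [h'] at h
      simpa using h
    have h2 : (s + 5).choose 2 * 2 = (s + 5) * (s + 4) := by
      have h := Nat.choose_succ_right_eq (s + 5) 1
      have h' : s + 5 - 1 = s + 4 := by omega
      rw [h', Nat.choose_one_right] at h
      simpa using h
    calc (s + 5).choose 3 * 6 = (s + 5).choose 3 * 3 * 2 := by ring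
      _ = (s + 5).choose 2 * (s + 3) * 2 := by rw [h3]
      _ = (s + 5).choose 2 * 2 * (s + 3) := by ring
      _ = (s + 5) * (s + 4) * (s + 3) := by rw [h2]
  have hC2big : (s + 3) * (s + 5) ≤ 2 * C2 := by
    linarith [hTval, hTle, Nat.zero_le (s * s * s), Nat.zero_le (s * s), Nat.zero_le s]
  have hC2sm : s + 3 ≤ C2 := by
    linarith [hTval, hTle, Nat.zero_le (s * s * s), Nat.zero_le (s * s), Nat.zero_le s]
  -- ceiling division
  obtain ⟨q, e, hqe, hemod⟩ : ∃ q e, d + s + 3 = (s + 4) * q + e ∧ e < s + 4 :=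
    ⟨(d + s + 3) / (s + 4), (d + s + 3) % (s + 4),
      by rw [Nat.div_add_mod], Nat.mod_lt _ (by omega)⟩
  have hq1 : d ≤ (s + 4) * q := by omega
  have hq2 : (s + 4) * q ≤ d + s + 3 := by omega
  -- main bound : a := s+3+q ≤ C1
  have h3C2 : 3 * C2 ≤ (k + 3) * C2 := Nat.mul_le_mul_right _ (by omega)
  have hkey : (s + 4) * (s + 3 + q) ≤ (s + 4) * C1 := by
    have step1 : (s + 4) * (s + 3 + q) ≤ d + (s + 3) * (s + 5) := by linarith [hq2]
    have step2 : d + (s + 3) * (s + 5) ≤ d + 2 * C2 := by omega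
    have step3 : d + 2 * C2 ≤ C1 + 3 * C2 := by omega
    have step5 : C1 + (k + 3) * C2 = (s + 4) * C1 := by
      rw [mul_comm (k + 3) C2, hid]; ring
    omega
  have ha_le : s + 3 + q ≤ C1 := Nat.le_of_mul_le_mul_left hkey (by omega)
  have ha2 : s + 3 + q + (s + 3) ≤ d := by
    have hmul := Nat.mul_le_mul_left (s + 3) hd
    have : (s + 4) * (s + 3 + q + (s + 3)) ≤ (s + 4) * d := by linarith [hq2, hmul]
    exact Nat.le_of_mul_le_mul_left this (by omega)
  rcases le_total (d - C2) (s + 3 + q) with hbr | hbr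
  · -- branch 1 : d₁ = s + 3 + q
    refine ⟨s + 3 + q, d - (s + 3 + q), by omega, by omega, by omega, ha_le, by omega,
      by linarith [hq1], by omega, ?_⟩
    intro hk
    have hk0 : k = 0 := by omega
    subst hk0
    have hy : (s + 3 + q) + (d - (s + 3 + q)) = d := by omega
    have hxy : (s + 4) * (s + 3 + q) + (s + 4) * (d - (s + 3 + q)) = (s + 4) * d := by
      rw [← Nat.mul_add, hy]
    have hmul3 := Nat.mul_le_mul_left (s + 3) hd
    linarith [hq2, hxy, hmul3]
  · -- branch 2 : d₁ = d - C2, d₂ = C2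
    have hC2lt : C2 < d := by omega
    refine ⟨d - C2, C2, by omega, by omega, by omega, by omega, le_refl _, ?_, by omega, ?_⟩
    · have hmul := Nat.mul_le_mul_left (s + 4) hbr
      linarith [hmul, hq1]
    · intro hk
      have hk0 : k = 0 := by omega
      subst hk0
      have hmul := Nat.mul_le_mul_left (s + 3) hdC
      linarith [hid, hmul, Nat.zero_le (s * C2)]
end

section
/- Let m ≥ 5 be an integer, let a, b, c be nonnegative integers with a = 0 or c = 0, and let (n_1, …, n_j) be a sequence of positive integers with n_1 + … + n_j = a + b + 3c which has one of the following three forms, where n_1 ∈ {2m, 2m−2, 2m−4}: (1) m is even, j = m/2 + 1, n_k = 2m − 4(k−1) for 2 ≤ k ≤ m/2, and n_j = 1; (2) m is even, j = m/2, and n_k = 2m − 4(k−1) for 2 ≤ k ≤ j; (3) m is odd, j = (m+1)/2, and n_k = 2m − 4(k−1) for 2 ≤ k ≤ j. Then (n_1, …, n_j) is (a,b,c)-elliptic-reachable. -/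
/-- Add to column `i` the triple `s = (number of ✓'s, number of −'s, number of +'s)`. -/
def addSyms {j : ℕ} (i : Fin j) (s : ℕ × ℕ × ℕ) (f : Fin j → ℕ × ℕ × ℕ) :
    Fin j → ℕ × ℕ × ℕ :=
  Function.update f i (f i + s)

/-- `EllipticPlay a b c f` means that the configuration `f` — recording for each of the
`j` columns the triple (number of ✓'s, number of −'s, number of +'s) — can be produced
by a play of the game consisting of exactly `a` moves of type (1), exactly `b` moves of
type (2), and exactly `c` further moves, each of type (3), (4), or (5):
(1) add a ✓ to any one column; (2) add a − to any one column;
(3) choose distinct columns `i₁, i₂` and a column `i₃` with `i₁ < i₃` and `i₂ < i₃`, and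
add a − to each of columns `i₁` and `i₂` and a + to column `i₃`;
(4) choose columns `i < i'` and add a − to column `i` and both a + and a − to column
`i'`; (5) add one + and two −'s to a single column. -/
inductive EllipticPlay {j : ℕ} : ℕ → ℕ → ℕ → (Fin j → ℕ × ℕ × ℕ) → Prop
  | init : EllipticPlay 0 0 0 (fun _ => (0, 0, 0))
  | move1 {a b c : ℕ} {f : Fin j → ℕ × ℕ × ℕ} (i : Fin j) :
      EllipticPlay a b c f → EllipticPlay (a + 1) b c (addSyms i (1, 0, 0) f)
  | move2 {a b c : ℕ} {f : Fin j → ℕ × ℕ × ℕ} (i : Fin j) :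
      EllipticPlay a b c f → EllipticPlay a (b + 1) c (addSyms i (0, 1, 0) f)
  | move3 {a b c : ℕ} {f : Fin j → ℕ × ℕ × ℕ} (i₁ i₂ i₃ : Fin j)
      (h₁₂ : i₁ ≠ i₂) (h₁₃ : i₁ < i₃) (h₂₃ : i₂ < i₃) :
      EllipticPlay a b c f → EllipticPlay a b (c + 1)
        (addSyms i₁ (0, 1, 0) (addSyms i₂ (0, 1, 0) (addSyms i₃ (0, 0, 1) f)))
  | move4 {a b c : ℕ} {f : Fin j → ℕ × ℕ × ℕ} (i i' : Fin j) (h : i < i') :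
      EllipticPlay a b c f → EllipticPlay a b (c + 1)
        (addSyms i (0, 1, 0) (addSyms i' (0, 1, 1) f))
  | move5 {a b c : ℕ} {f : Fin j → ℕ × ℕ × ℕ} (i : Fin j) :
      EllipticPlay a b c f → EllipticPlay a b (c + 1) (addSyms i (0, 2, 1) f)

/-- A sequence `(n_1, …, n_j)` of positive integers is `(a, b, c)`-elliptic-reachable
if some play of the game ends with exactly `n_k` symbols in column `k` for every `k`,
every column contains a ✓ or contains a different number of −'s than +'s, and the first
column contains a ✓ or the number of −'s in it is not exactly one more than the number
of +'s in it. -/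
def EllipticReachable {j : ℕ} (a b c : ℕ) (n : Fin j → ℕ) : Prop :=
  ∃ f : Fin j → ℕ × ℕ × ℕ, EllipticPlay a b c f ∧
    (∀ k, (f k).1 + (f k).2.1 + (f k).2.2 = n k) ∧
    (∀ k, 0 < (f k).1 ∨ (f k).2.1 ≠ (f k).2.2) ∧
    (∀ k : Fin j, (k : ℕ) = 0 → (0 < (f k).1 ∨ (f k).2.1 ≠ (f k).2.2 + 1))


namespace EllAux

variable {j : ℕ}

def shiftF (g : Fin j → ℕ) (k : Fin j) : ℕ :=
  if h : k.1 + 1 < j then g ⟨k.1 + 1, h⟩ else 0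

lemma trip_add (a b c d e f : ℕ) : ((a, b, c) : ℕ × ℕ × ℕ) + (d, e, f) = (a + d, b + e, c + f) := rfl

lemma addSyms_of_ne {f : Fin j → ℕ × ℕ × ℕ} {i k : Fin j} (s : ℕ × ℕ × ℕ) (h : k ≠ i) :
    addSyms i s f k = f k := by
  simp [addSyms, Function.update_of_ne h]

lemma addSyms_self {f : Fin j → ℕ × ℕ × ℕ} {i : Fin j} (s : ℕ × ℕ × ℕ) :
    addSyms i s f i = f i + s := by
  simp [addSyms]

lemma sum_succ_update (g : Fin j → ℕ) (i : Fin j) (hi : g i ≠ 0) :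
    ∑ k, Function.update g i (g i - 1) k + 1 = ∑ k, g k := by
  rw [Finset.sum_update_of_mem (Finset.mem_univ i), Finset.sdiff_singleton_eq_erase]
  have h2 := Finset.sum_erase_add Finset.univ g (Finset.mem_univ i)
  omega

lemma exists_pos {g : Fin j → ℕ} {N : ℕ} (h : ∑ k, g k = N + 1) : ∃ i, g i ≠ 0 := by
  by_contra hc
  push_neg at hc
  have : ∑ k, g k = 0 := Finset.sum_eq_zero fun k _ => hc k
  omega

lemma it5 {a b c : ℕ} {f : Fin j → ℕ × ℕ × ℕ} (h : EllipticPlay a b c f) (g : Fin j → ℕ) :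
    EllipticPlay a b (c + ∑ k, g k) (fun k => f k + (0, 2 * g k, g k)) := by
  generalize hN : (∑ k, g k) = N
  induction N generalizing g with
  | zero =>
    have hz : ∀ k, g k = 0 := fun k => (Finset.sum_eq_zero_iff).mp hN k (Finset.mem_univ k)
    have hfe : (fun k => f k + (0, 2 * g k, g k)) = f := by
      funext k; rw [hz k]; simp
    rw [hfe, Nat.add_zero]; exact h
  | succ N ih =>
    obtain ⟨i, hi⟩ := exists_pos hN
    have hN' : ∑ k, Function.update g i (g i - 1) k = N := by
      have := sum_succ_update g i hi; omega
    have hp := EllipticPlay.move5 i (ih _ hN')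
    have hfe : addSyms i (0, 2, 1)
        (fun k => f k + (0, 2 * Function.update g i (g i - 1) k, Function.update g i (g i - 1) k)) =
        fun k => f k + (0, 2 * g k, g k) := by
      funext k
      by_cases hk : k = i
      · subst hk
        have ht : ((0:ℕ), 2 * (g k - 1), g k - 1) + ((0:ℕ), (2:ℕ), (1:ℕ)) =
            ((0:ℕ), 2 * g k, g k) := by
          rw [trip_add]; simp only [Prod.mk.injEq]
          exact ⟨trivial, by omega, by omega⟩
        rw [addSyms_self, Function.update_self, add_assoc, ht]
      · rw [addSyms_of_ne _ hk, Function.update_of_ne hk]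
    rw [← hfe]
    exact hp

lemma trip_eq {a b c d e f : ℕ} (h1 : a = d) (h2 : b = e) (h3 : c = f) :
    ((a, b, c) : ℕ × ℕ × ℕ) = (d, e, f) := by
  subst h1; subst h2; subst h3; rfl

lemma it1 {a b c : ℕ} {f : Fin j → ℕ × ℕ × ℕ} (h : EllipticPlay a b c f) (g : Fin j → ℕ) :
    EllipticPlay (a + ∑ k, g k) b c (fun k => f k + (g k, 0, 0)) := by
  generalize hN : (∑ k, g k) = N
  induction N generalizing g with
  | zero =>
    have hz : ∀ k, g k = 0 := fun k => (Finset.sum_eq_zero_iff).mp hN k (Finset.mem_univ k)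
    have hfe : (fun k => f k + (g k, 0, 0)) = f := by
      funext k; rw [hz k]; simp
    rw [hfe, Nat.add_zero]; exact h
  | succ N ih =>
    obtain ⟨i, hi⟩ := exists_pos hN
    have hN' : ∑ k, Function.update g i (g i - 1) k = N := by
      have := sum_succ_update g i hi; omega
    have hp := EllipticPlay.move1 i (ih _ hN')
    have hfe : addSyms i (1, 0, 0)
        (fun k => f k + (Function.update g i (g i - 1) k, 0, 0)) =
        fun k => f k + (g k, 0, 0) := by
      funext k
      by_cases hk : k = i
      · subst hk
        rw [addSyms_self, Function.update_self, add_assoc]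
        have ht : ((g k - 1 : ℕ), (0:ℕ), (0:ℕ)) + ((1:ℕ), (0:ℕ), (0:ℕ)) = ((g k : ℕ), (0:ℕ), (0:ℕ)) := by
          rw [trip_add]; exact trip_eq (by omega) rfl rfl
        rw [ht]
      · rw [addSyms_of_ne _ hk, Function.update_of_ne hk]
    rw [← hfe]
    exact hp

lemma it2 {a b c : ℕ} {f : Fin j → ℕ × ℕ × ℕ} (h : EllipticPlay a b c f) (g : Fin j → ℕ) :
    EllipticPlay a (b + ∑ k, g k) c (fun k => f k + (0, g k, 0)) := by
  generalize hN : (∑ k, g k) = N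
  induction N generalizing g with
  | zero =>
    have hz : ∀ k, g k = 0 := fun k => (Finset.sum_eq_zero_iff).mp hN k (Finset.mem_univ k)
    have hfe : (fun k => f k + (0, g k, 0)) = f := by
      funext k; rw [hz k]; simp
    rw [hfe, Nat.add_zero]; exact h
  | succ N ih =>
    obtain ⟨i, hi⟩ := exists_pos hN
    have hN' : ∑ k, Function.update g i (g i - 1) k = N := by
      have := sum_succ_update g i hi; omega
    have hp := EllipticPlay.move2 i (ih _ hN')
    have hfe : addSyms i (0, 1, 0)
        (fun k => f k + (0, Function.update g i (g i - 1) k, 0)) =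
        fun k => f k + (0, g k, 0) := by
      funext k
      by_cases hk : k = i
      · subst hk
        rw [addSyms_self, Function.update_self, add_assoc]
        have ht : ((0:ℕ), (g k - 1 : ℕ), (0:ℕ)) + ((0:ℕ), (1:ℕ), (0:ℕ)) = ((0:ℕ), (g k : ℕ), (0:ℕ)) := by
          rw [trip_add]; exact trip_eq rfl (by omega) rfl
        rw [ht]
      · rw [addSyms_of_ne _ hk, Function.update_of_ne hk]
    rw [← hfe]
    exact hp

lemma shiftF_pos {g : Fin j → ℕ} {k : Fin j} (h : k.1 + 1 < j) :
    shiftF g k = g ⟨k.1 + 1, h⟩ := by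
  simp [shiftF, h]

lemma shiftF_congr {g₁ g₂ : Fin j → ℕ} (k : Fin j)
    (h : ∀ m : Fin j, m.1 = k.1 + 1 → g₁ m = g₂ m) : shiftF g₁ k = shiftF g₂ k := by
  unfold shiftF
  split
  · exact h _ rfl
  · rfl

lemma it4 {a b c : ℕ} {f : Fin j → ℕ × ℕ × ℕ} (h : EllipticPlay a b c f) (g : Fin j → ℕ)
    (hg : ∀ k, g k ≠ 0 → 1 ≤ k.1) :
    EllipticPlay a b (c + ∑ k, g k) (fun k => f k + (0, g k + shiftF g k, g k)) := by
  generalize hN : (∑ k, g k) = N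
  induction N generalizing g with
  | zero =>
    have hz : ∀ k, g k = 0 := fun k => (Finset.sum_eq_zero_iff).mp hN k (Finset.mem_univ k)
    have hsz : ∀ k, shiftF g k = 0 := by
      intro k; unfold shiftF; split
      · exact hz _
      · rfl
    have hfe : (fun k => f k + (0, g k + shiftF g k, g k)) = f := by
      funext k; rw [hz k, hsz k]; simp
    rw [hfe, Nat.add_zero]; exact h
  | succ N ih =>
    obtain ⟨i, hi⟩ := exists_pos hN
    have hi1 : 1 ≤ i.1 := hg i hi
    have hiv : i.1 < j := i.2
    have hN' : ∑ k, Function.update g i (g i - 1) k = N := by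
      have := sum_succ_update g i hi; omega
    have hg' : ∀ k, Function.update g i (g i - 1) k ≠ 0 → 1 ≤ k.1 := by
      intro k hk
      by_cases hki : k = i
      · subst hki; exact hi1
      · rw [Function.update_of_ne hki] at hk; exact hg k hk
    obtain ⟨ip, hipv⟩ : ∃ p : Fin j, p.1 = i.1 - 1 :=
      ⟨⟨i.1 - 1, lt_of_le_of_lt (Nat.sub_le _ _) i.2⟩, rfl⟩
    have hipne : ip ≠ i := by
      rw [Fin.ne_iff_vne]; omega
    have hlt : ip < i := by
      rw [Fin.lt_def]; omega
    have hp := EllipticPlay.move4 ip i hlt (ih _ hg' hN')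
    have hfe : addSyms ip (0, 1, 0) (addSyms i (0, 1, 1)
        (fun k => f k + (0, Function.update g i (g i - 1) k +
          shiftF (Function.update g i (g i - 1)) k, Function.update g i (g i - 1) k))) =
        fun k => f k + (0, g k + shiftF g k, g k) := by
      funext k
      by_cases hk : k = i
      · subst hk
        rw [addSyms_of_ne _ (Ne.symm hipne), addSyms_self, Function.update_self]
        have hsh : shiftF (Function.update g k (g k - 1)) k = shiftF g k := by
          apply shiftF_congr
          intro m hm
          apply Function.update_of_ne
          rw [Fin.ne_iff_vne]; omega
        rw [hsh, add_assoc]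
        have ht : ((0:ℕ), (g k - 1 + shiftF g k : ℕ), (g k - 1 : ℕ)) + ((0:ℕ), (1:ℕ), (1:ℕ)) =
            ((0:ℕ), (g k + shiftF g k : ℕ), (g k : ℕ)) := by
          rw [trip_add]; exact trip_eq rfl (by omega) (by omega)
        rw [ht]
      · by_cases hk2 : k = ip
        · subst hk2
          rw [addSyms_self, addSyms_of_ne _ hk, Function.update_of_ne hk]
          have hkv : k.1 ≠ i.1 := fun hc => hk (Fin.ext hc)
          have hvlt : k.1 + 1 < j := by omega
          have heqi : (⟨k.1 + 1, hvlt⟩ : Fin j) = i := by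
            apply Fin.ext
            simp only [Fin.val_mk]
            omega
          have hsh : shiftF (Function.update g i (g i - 1)) k = g i - 1 := by
            rw [shiftF_pos hvlt, heqi, Function.update_self]
          have hsh2 : shiftF g k = g i := by
            rw [shiftF_pos hvlt, heqi]
          rw [hsh, hsh2, add_assoc]
          have ht : ((0:ℕ), (g k + (g i - 1) : ℕ), (g k : ℕ)) + ((0:ℕ), (1:ℕ), (0:ℕ)) =
              ((0:ℕ), (g k + g i : ℕ), (g k : ℕ)) := by
            rw [trip_add]; exact trip_eq rfl (by omega) rfl
          rw [ht]
        · rw [addSyms_of_ne _ hk2, addSyms_of_ne _ hk, Function.update_of_ne hk]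
          have hkv : k.1 ≠ ip.1 := fun hc => hk2 (Fin.ext hc)
          have hsh : shiftF (Function.update g i (g i - 1)) k = shiftF g k := by
            apply shiftF_congr
            intro m hm
            apply Function.update_of_ne
            rw [Fin.ne_iff_vne]; omega
          rw [hsh]
    rw [← hfe]
    exact hp

lemma it3 {a b c : ℕ} {f : Fin j → ℕ × ℕ × ℕ} (h : EllipticPlay a b c f) (g : Fin j → ℕ)
    (hg : ∀ k, g k ≠ 0 → 2 ≤ k.1) :
    EllipticPlay a b (c + ∑ k, g k)
      (fun k => f k + (0, if k.1 ≤ 1 then ∑ k', g k' else 0, g k)) := by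
  generalize hN : (∑ k, g k) = N
  induction N generalizing g with
  | zero =>
    have hz : ∀ k, g k = 0 := fun k => (Finset.sum_eq_zero_iff).mp hN k (Finset.mem_univ k)
    have hfe : (fun k => f k + (0, if k.1 ≤ 1 then (0:ℕ) else 0, g k)) = f := by
      funext k; rw [hz k]; simp
    rw [Nat.add_zero, hfe]
    exact h
  | succ N ih =>
    obtain ⟨i, hi⟩ := exists_pos hN
    have hi2 : 2 ≤ i.1 := hg i hi
    have hj2 : 2 < j := lt_of_le_of_lt hi2 i.2
    have hN' : ∑ k, Function.update g i (g i - 1) k = N := by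
      have := sum_succ_update g i hi; omega
    have hg' : ∀ k, Function.update g i (g i - 1) k ≠ 0 → 2 ≤ k.1 := by
      intro k hk
      by_cases hki : k = i
      · subst hki; exact hi2
      · rw [Function.update_of_ne hki] at hk; exact hg k hk
    obtain ⟨i0, hi0v⟩ : ∃ p : Fin j, p.1 = 0 := ⟨⟨0, by omega⟩, rfl⟩
    obtain ⟨i1, hi1v⟩ : ∃ p : Fin j, p.1 = 1 := ⟨⟨1, by omega⟩, rfl⟩
    have h01 : i0 ≠ i1 := by rw [Fin.ne_iff_vne]; omega
    have h0i : i0 < i := by rw [Fin.lt_def]; omega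
    have h1i : i1 < i := by rw [Fin.lt_def]; omega
    have h0ne : i0 ≠ i := by rw [Fin.ne_iff_vne]; omega
    have h1ne : i1 ≠ i := by rw [Fin.ne_iff_vne]; omega
    have hp := EllipticPlay.move3 i0 i1 i h01 h0i h1i (ih _ hg' hN')
    have hfe : addSyms i0 (0, 1, 0) (addSyms i1 (0, 1, 0) (addSyms i (0, 0, 1)
        (fun k => f k + (0, if k.1 ≤ 1 then N else 0, Function.update g i (g i - 1) k)))) =
        fun k => f k + (0, if k.1 ≤ 1 then N + 1 else 0, g k) := by
      funext k
      by_cases hk : k = i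
      · subst hk
        rw [addSyms_of_ne _ (Ne.symm h0ne), addSyms_of_ne _ (Ne.symm h1ne), addSyms_self,
          Function.update_self]
        have hite : ¬ (k.1 ≤ 1) := by omega
        rw [if_neg hite, if_neg hite, add_assoc]
        have ht : ((0:ℕ), (0:ℕ), (g k - 1 : ℕ)) + ((0:ℕ), (0:ℕ), (1:ℕ)) =
            ((0:ℕ), (0:ℕ), (g k : ℕ)) := by
          rw [trip_add]; exact trip_eq rfl rfl (by omega)
        rw [ht]
      · by_cases hk0 : k = i0
        · subst hk0
          rw [addSyms_self, addSyms_of_ne _ h01, addSyms_of_ne _ h0ne,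
            Function.update_of_ne h0ne]
          have hite : k.1 ≤ 1 := by omega
          rw [if_pos hite, if_pos hite, add_assoc]
          have ht : ((0:ℕ), (N:ℕ), (g k : ℕ)) + ((0:ℕ), (1:ℕ), (0:ℕ)) =
              ((0:ℕ), (N + 1 : ℕ), (g k : ℕ)) := by
            rw [trip_add]; exact trip_eq rfl rfl rfl
          rw [ht]
        · by_cases hk1 : k = i1
          · subst hk1
            rw [addSyms_of_ne _ (Ne.symm h01), addSyms_self, addSyms_of_ne _ h1ne,
              Function.update_of_ne h1ne]
            have hite : k.1 ≤ 1 := by omega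
            rw [if_pos hite, if_pos hite, add_assoc]
            have ht : ((0:ℕ), (N:ℕ), (g k : ℕ)) + ((0:ℕ), (1:ℕ), (0:ℕ)) =
                ((0:ℕ), (N + 1 : ℕ), (g k : ℕ)) := by
              rw [trip_add]; exact trip_eq rfl rfl rfl
            rw [ht]
          · rw [addSyms_of_ne _ hk0, addSyms_of_ne _ hk1, addSyms_of_ne _ hk,
              Function.update_of_ne hk]
            have hv0 : k.1 ≠ i0.1 := fun hc => hk0 (Fin.ext hc)
            have hv1 : k.1 ≠ i1.1 := fun hc => hk1 (Fin.ext hc)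
            have hite : ¬ (k.1 ≤ 1) := by omega
            rw [if_neg hite, if_neg hite]
    rw [← hfe]
    exact hp

lemma play_counts (aa bb u x w : Fin j → ℕ)
    (hx : ∀ k, x k ≠ 0 → 1 ≤ k.1) (hw : ∀ k, w k ≠ 0 → 2 ≤ k.1) :
    EllipticPlay (∑ k, aa k) (∑ k, bb k) (∑ k, u k + ∑ k, x k + ∑ k, w k)
      (fun k => (aa k,
        bb k + 2 * u k + (x k + shiftF x k) + (if k.1 ≤ 1 then ∑ k', w k' else 0),
        u k + x k + w k)) := by
  have h0 : EllipticPlay (0 : ℕ) 0 0 (fun _ : Fin j => ((0:ℕ), (0:ℕ), (0:ℕ))) :=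
    EllipticPlay.init
  have h1 := it1 h0 aa
  have h2 := it2 h1 bb
  have h5 := it5 h2 u
  have h4 := it4 h5 x hx
  have h3 := it3 h4 w hw
  have hfe : (fun k => (((((fun _ : Fin j => ((0:ℕ), (0:ℕ), (0:ℕ))) k + (aa k, 0, 0)) + (0, bb k, 0)) +
      (0, 2 * u k, u k)) + (0, x k + shiftF x k, x k)) + (0, if k.1 ≤ 1 then ∑ k', w k' else 0, w k)) =
      (fun k => ((aa k : ℕ),
        bb k + 2 * u k + (x k + shiftF x k) + (if k.1 ≤ 1 then ∑ k', w k' else 0),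
        u k + x k + w k)) := by
    funext k
    simp only [trip_add]
    exact trip_eq (by omega) (by omega) (by omega)
  have hc1 : (0 : ℕ) + ∑ k, aa k = ∑ k, aa k := by omega
  have hc2 : (0 : ℕ) + ∑ k, bb k = ∑ k, bb k := by omega
  rw [hc1, hc2] at h3
  have hc3 : (0 : ℕ) + ∑ k, u k + ∑ k, x k + ∑ k, w k = ∑ k, u k + ∑ k, x k + ∑ k, w k := by omega
  rw [hc3] at h3
  rw [← hfe]
  exact h3

lemma distr (cap : Fin j → ℕ) (c : ℕ) (hc : c ≤ ∑ k, cap k) :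
    ∃ g : Fin j → ℕ, (∀ k, g k ≤ cap k) ∧ ∑ k, g k = c := by
  induction c with
  | zero => exact ⟨fun _ => 0, fun _ => Nat.zero_le _, by simp⟩
  | succ c ih =>
    obtain ⟨g, hg, hgs⟩ := ih (by omega)
    obtain ⟨i, hi⟩ : ∃ i, g i < cap i := by
      by_contra hcon
      push_neg at hcon
      have : ∑ k, cap k ≤ ∑ k, g k := Finset.sum_le_sum fun k _ => hcon k
      omega
    refine ⟨Function.update g i (g i + 1), ?_, ?_⟩
    · intro k
      by_cases hk : k = i
      · subst hk; rw [Function.update_self]; omega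
      · rw [Function.update_of_ne hk]; exact hg k
    · have h1 := Finset.sum_update_of_mem (Finset.mem_univ i) g (g i + 1)
      rw [Finset.sdiff_singleton_eq_erase] at h1
      have h2 := Finset.sum_erase_add Finset.univ g (Finset.mem_univ i)
      omega

lemma sum_range_ite (N bnd a v : ℕ) :
    ∑ i ∈ Finset.range N, (if a ≤ i ∧ i < bnd then v else 0) = (min bnd N - a) * v := by
  induction N with
  | zero => simp
  | succ N ih =>
    rw [Finset.sum_range_succ, ih]
    split_ifs with h
    · have h1 : min bnd (N + 1) - a = (min bnd N - a) + 1 := by omega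
      rw [h1, Nat.succ_mul]
    · have h1 : min bnd (N + 1) - a = min bnd N - a := by omega
      rw [h1, Nat.add_zero]

lemma sum_shift (x : ℕ → ℕ) (J : ℕ) (h0 : x 0 = 0) (hj : x J = 0) :
    ∑ i ∈ Finset.range J, x (i + 1) = ∑ i ∈ Finset.range J, x i := by
  have A := Finset.sum_range_succ' x J
  have B := Finset.sum_range_succ x J
  omega



def nvF (t e i : ℕ) : ℕ := 4 * (t - i) + 2 + 2 * e

def WF (tr : ℕ) : ℕ := 2 + tr

def FF (t e tr : ℕ) : ℕ → ℕ
  | 0 => e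
  | d + 1 => (2 * (nvF t e (t - (d + 1)) - FF t e tr d -
      (if t - (d + 1) = 1 then WF tr else 0))) % 3

def xF (t e tr i : ℕ) : ℕ := if 1 ≤ i ∧ i ≤ t then FF t e tr (t - i) else 0

def wF (t tr i : ℕ) : ℕ := (if i = t then 2 else 0) + (if i = t + 1 ∧ tr = 1 then 1 else 0)

def uF (t e tr n0 i : ℕ) : ℕ :=
  if i = 0 then (n0 - (xF t e tr 1 + WF tr)) / 3
  else if i ≤ t then
    (nvF t e i - (2 * xF t e tr i + wF t tr i +
      (xF t e tr (i + 1) + if i = 1 then WF tr else 0))) / 3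
  else 0

def b0F (t e tr n0 : ℕ) : ℕ := (n0 - (xF t e tr 1 + WF tr)) % 3

variable {t e tr n0 i : ℕ}

lemma FF_le (he : e ≤ 1) (d : ℕ) : FF t e tr d ≤ 2 := by
  cases d with
  | zero =>
    have : FF t e tr 0 = e := rfl
    omega
  | succ d =>
    have : FF t e tr (d + 1) = (2 * (nvF t e (t - (d + 1)) - FF t e tr d -
        (if t - (d + 1) = 1 then WF tr else 0))) % 3 := rfl
    rw [this]
    omega

lemma xF_le (he : e ≤ 1) (i : ℕ) : xF t e tr i ≤ 2 := by
  unfold xF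
  split
  · exact FF_le he _
  · omega

lemma xF_zero : xF t e tr 0 = 0 := by simp [xF]

lemma xF_gt (h : t < i) : xF t e tr i = 0 := by
  unfold xF
  rw [if_neg (by omega)]

lemma xF_t (ht : 1 ≤ t) : xF t e tr t = e := by
  unfold xF
  rw [if_pos ⟨ht, le_refl _⟩, Nat.sub_self]
  rfl

lemma xF_rec (h1 : 1 ≤ i) (h2 : i < t) :
    xF t e tr i = (2 * (nvF t e i - xF t e tr (i + 1) -
      (if i = 1 then WF tr else 0))) % 3 := by
  have hx1 : xF t e tr i = FF t e tr ((t - i - 1) + 1) := by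
    unfold xF
    rw [if_pos ⟨h1, by omega⟩]
    congr 1
    omega
  have hx2 : xF t e tr (i + 1) = FF t e tr (t - i - 1) := by
    unfold xF
    rw [if_pos ⟨by omega, by omega⟩]
    rfl
  rw [hx1, hx2]
  have hFF : FF t e tr ((t - i - 1) + 1) = (2 * (nvF t e (t - ((t - i - 1) + 1)) -
      FF t e tr (t - i - 1) - (if t - ((t - i - 1) + 1) = 1 then WF tr else 0))) % 3 := rfl
  rw [hFF]
  have hidx : t - ((t - i - 1) + 1) = i := by omega
  rw [hidx]

lemma wF_lt (h2 : i < t) : wF t tr i = 0 := by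
  unfold wF
  rw [if_neg (by omega), if_neg (by omega)]

lemma wF_t : wF t tr t = 2 := by
  unfold wF
  rw [if_pos rfl, if_neg (by omega)]

lemma nvF_ge (h2 : i < t) : 6 ≤ nvF t e i := by
  unfold nvF
  omega

lemma keyA (ht : 2 ≤ t) (he : e ≤ 1) (htr : tr ≤ 1) (h1 : 1 ≤ i) (h2 : i < t) :
    xF t e tr (i + 1) + (if i = 1 then WF tr else 0) + 2 ≤ nvF t e i := by
  have hW : WF tr ≤ 3 := by unfold WF; omega
  by_cases hi1 : i = 1
  · subst hi1
    rw [if_pos rfl]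
    rw [show (1:ℕ) + 1 = 2 from rfl]
    by_cases ht2 : t = 2
    · subst ht2
      rw [xF_t (by omega)]
      unfold nvF
      omega
    · have := xF_le (t := t) (tr := tr) he 2
      unfold nvF
      omega
  · rw [if_neg hi1]
    have := xF_le (t := t) (tr := tr) he (i + 1)
    have := nvF_ge (t := t) (e := e) h2
    omega

lemma key (ht : 2 ≤ t) (he : e ≤ 1) (htr : tr ≤ 1) (h1 : 1 ≤ i) (h2 : i < t) :
    3 * uF t e tr n0 i + (2 * xF t e tr i +
      (xF t e tr (i + 1) + if i = 1 then WF tr else 0)) = nvF t e i := by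
  have hrec := xF_rec (t := t) (e := e) (tr := tr) h1 h2
  have hA := keyA (t := t) (e := e) (tr := tr) ht he htr h1 h2
  have hu : uF t e tr n0 i = (nvF t e i - (2 * xF t e tr i + 0 +
      (xF t e tr (i + 1) + if i = 1 then WF tr else 0))) / 3 := by
    unfold uF
    rw [if_neg (by omega), if_pos (by omega : i ≤ t), wF_lt h2]
  rw [hu]
  generalize hQn : nvF t e i = Q at *
  generalize hQ1 : xF t e tr (i + 1) + (if i = 1 then WF tr else 0) = A at *
  generalize hQx : xF t e tr i = X at *
  rw [Nat.sub_sub] at hrec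
  omega

lemma uF_t (ht : 2 ≤ t) : uF t e tr n0 t = 0 := by
  unfold uF
  rw [if_neg (by omega), if_pos (le_refl t), wF_t, xF_t (by omega), xF_gt (by omega),
    if_neg (by omega)]
  unfold nvF
  omega

lemma shiftF_zero {j : ℕ} (k : Fin j) : shiftF (fun _ => 0) k = 0 := by
  unfold shiftF
  split <;> rfl

lemma uF_gt {t e tr n0 i : ℕ} (ht : 2 ≤ t) (h : t < i) : uF t e tr n0 i = 0 := by
  unfold uF
  rw [if_neg (by omega), if_neg (by omega)]

lemma wF_zero {t tr i : ℕ} (ht : 2 ≤ t) (h0 : i = 0 ∨ i = 1) : wF t tr i = 0 := by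
  unfold wF
  rw [if_neg (by omega), if_neg (by omega)]

lemma wF_t1 {t tr : ℕ} (htr1 : tr = 1) : wF t tr (t + 1) = 1 := by
  unfold wF
  rw [if_neg (by omega), if_pos ⟨rfl, htr1⟩]

lemma master {j : ℕ} (t e tr : ℕ) (n : Fin j → ℕ) (b c : ℕ)
    (ht : 2 ≤ t) (he : e ≤ 1) (htr : tr ≤ 1) (hj : j = t + 1 + tr)
    (h0 : ∀ k : Fin j, k.1 = 0 → 6 ≤ n k)
    (hni : ∀ k : Fin j, 1 ≤ k.1 → k.1 ≤ t → n k = nvF t e k.1)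
    (htrail : ∀ k : Fin j, k.1 = t + 1 → n k = 1)
    (hsum : ∑ k, n k = b + 3 * c) : EllipticReachable 0 b c n := by
  have hj0 : 0 < j := by omega
  set n0 := n ⟨0, hj0⟩ with hn0def
  have hn0 : 6 ≤ n0 := h0 ⟨0, hj0⟩ rfl
  set W := WF tr with hWdef
  have hW : W = 2 + tr := rfl
  set b0 := b0F t e tr n0 with hb0def
  have hx1le : xF t e tr 1 ≤ 2 := xF_le he 1
  have hb0lt : b0 < 3 := Nat.mod_lt _ (by norm_num)
  have hWle : W ≤ 3 := by omega
  have hcol0 : 3 * uF t e tr n0 0 + (xF t e tr 1 + W) + b0 = n0 := by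
    have hu0 : uF t e tr n0 0 = (n0 - (xF t e tr 1 + W)) / 3 := by
      unfold uF; rw [if_pos rfl]
    have hb0 : b0 = (n0 - (xF t e tr 1 + W)) % 3 := rfl
    omega
  -- per-column totals
  have hTOT : ∀ k : Fin j,
      3 * uF t e tr n0 k.1 + 2 * xF t e tr k.1 + xF t e tr (k.1 + 1) + wF t tr k.1 +
        (if k.1 ≤ 1 then W else 0) + (if k.1 = 0 then b0 else 0) = n k := by
    intro k
    have hkj : k.1 < j := k.2
    by_cases hk0 : k.1 = 0
    · have hkeq : k = ⟨0, hj0⟩ := Fin.ext hk0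
      rw [hk0, hkeq]
      rw [if_pos (by omega : (0:ℕ) ≤ 1), if_pos rfl, xF_zero, wF_zero ht (Or.inl rfl), ← hn0def]
      have hx01 : xF t e tr (0 + 1) = xF t e tr 1 := rfl
      omega
    · by_cases hkt : k.1 < t
      · have h1k : 1 ≤ k.1 := by omega
        have hkey := key (t := t) (e := e) (tr := tr) (n0 := n0) ht he htr h1k hkt
        have hnk := hni k h1k (by omega)
        rw [hnk, if_neg hk0, wF_lt hkt]
        by_cases hk1 : k.1 = 1
        · rw [if_pos hk1] at hkey
          rw [if_pos (by omega : k.1 ≤ 1)]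
          have hWW : W = WF tr := rfl
          omega
        · rw [if_neg hk1] at hkey
          rw [if_neg (by omega : ¬ k.1 ≤ 1)]
          omega
      · by_cases hkt2 : k.1 = t
        · have hnk := hni k (by omega) (by omega)
          have hu : uF t e tr n0 k.1 = 0 := by rw [hkt2]; exact uF_t ht
          have hx : xF t e tr k.1 = e := by rw [hkt2]; exact xF_t (by omega)
          have hx1 : xF t e tr (k.1 + 1) = 0 := by rw [hkt2]; exact xF_gt (by omega)
          have hwt : wF t tr k.1 = 2 := by rw [hkt2]; exact wF_t
          have hnv : nvF t e k.1 = 2 + 2 * e := by rw [hkt2]; unfold nvF; omega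
          rw [if_neg (by omega : ¬ k.1 ≤ 1), if_neg hk0]
          omega
        · have hkt1 : k.1 = t + 1 := by omega
          have htr1 : tr = 1 := by omega
          have hnk := htrail k hkt1
          have hu : uF t e tr n0 k.1 = 0 := by rw [hkt1]; exact uF_gt ht (by omega)
          have hx : xF t e tr k.1 = 0 := by rw [hkt1]; exact xF_gt (by omega)
          have hx1 : xF t e tr (k.1 + 1) = 0 := by rw [hkt1]; exact xF_gt (by omega)
          have hwt : wF t tr k.1 = 1 := by rw [hkt1]; exact wF_t1 htr1
          rw [if_neg (by omega : ¬ k.1 ≤ 1), if_neg hk0]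
          omega
    -- end hTOT
  -- range sums
  set Us := ∑ i ∈ Finset.range j, uF t e tr n0 i with hUsdef
  set Xs := ∑ i ∈ Finset.range j, xF t e tr i with hXsdef
  set Ws := ∑ i ∈ Finset.range j, wF t tr i with hWsdef
  have hWs : Ws = W := by
    rw [hWsdef]
    unfold wF
    rw [Finset.sum_add_distrib]
    have h1 : ∑ i ∈ Finset.range j, (if i = t then (2:ℕ) else 0) = 2 := by
      have hc : ∀ i ∈ Finset.range j, (if i = t then (2:ℕ) else 0) =
          (if t ≤ i ∧ i < t + 1 then 2 else 0) := by
        intro i _; split_ifs <;> omega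
      rw [Finset.sum_congr rfl hc, sum_range_ite]
      have hm : min (t + 1) j = t + 1 := by omega
      rw [hm]
      omega
    have h2 : ∑ i ∈ Finset.range j, (if i = t + 1 ∧ tr = 1 then (1:ℕ) else 0) = tr := by
      rcases (by omega : tr = 0 ∨ tr = 1) with h | h
      · rw [h]
        simp
      · have hc : ∀ i ∈ Finset.range j, (if i = t + 1 ∧ tr = 1 then (1:ℕ) else 0) =
            (if t + 1 ≤ i ∧ i < t + 2 then 1 else 0) := by
          intro i _; split_ifs with u1 u2 u2 <;> omega
        rw [Finset.sum_congr rfl hc, sum_range_ite]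
        have hm : min (t + 2) j = t + 2 := by omega
        rw [hm]
        omega
    rw [h1, h2, hW]
  have hx0 : xF t e tr 0 = 0 := xF_zero
  have hxj : xF t e tr j = 0 := xF_gt (by omega)
  have hXshift : ∑ i ∈ Finset.range j, xF t e tr (i + 1) = Xs :=
    sum_shift _ j hx0 hxj
  have hiteW : ∑ i ∈ Finset.range j, (if i ≤ 1 then W else 0) = 2 * W := by
    have hc : ∀ i ∈ Finset.range j, (if i ≤ 1 then W else 0) =
        (if 0 ≤ i ∧ i < 2 then W else 0) := by
      intro i _; split_ifs <;> omega
    rw [Finset.sum_congr rfl hc, sum_range_ite]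
    have hm : min 2 j = 2 := by omega
    rw [hm]
    try simp
  have hiteb0 : ∑ i ∈ Finset.range j, (if i = 0 then b0 else 0) = b0 := by
    have hc : ∀ i ∈ Finset.range j, (if i = 0 then b0 else 0) =
        (if 0 ≤ i ∧ i < 1 then b0 else 0) := by
      intro i _; split_ifs <;> omega
    rw [Finset.sum_congr rfl hc, sum_range_ite]
    have hm : min 1 j = 1 := by omega
    rw [hm]
    try simp
  have hglobal : b + 3 * c = 3 * (Us + Xs + Ws) + b0 := by
    have hns : ∑ k : Fin j, n k =
        ∑ i ∈ Finset.range j, (3 * uF t e tr n0 i + 2 * xF t e tr i + xF t e tr (i + 1) +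
          wF t tr i + (if i ≤ 1 then W else 0) + (if i = 0 then b0 else 0)) := by
      rw [← Fin.sum_univ_eq_sum_range (fun i => 3 * uF t e tr n0 i + 2 * xF t e tr i +
        xF t e tr (i + 1) + wF t tr i + (if i ≤ 1 then W else 0) + (if i = 0 then b0 else 0)) j]
      exact (Finset.sum_congr rfl fun k _ => (hTOT k).symm)
    rw [hns] at hsum
    rw [Finset.sum_add_distrib, Finset.sum_add_distrib, Finset.sum_add_distrib,
      Finset.sum_add_distrib, Finset.sum_add_distrib, ← Finset.mul_sum, ← Finset.mul_sum,
      hXshift, hiteW, hiteb0] at hsum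
    rw [← hUsdef, ← hXsdef, ← hWsdef] at hsum
    rw [← hsum, hWs]
    ring
  have hcle : c ≤ Us + Xs + Ws := by omega
  have hbeq : b = b0 + 3 * (Us + Xs + Ws - c) := by omega
  have hxfin : ∀ k : Fin j, (fun k : Fin j => xF t e tr k.1) k ≠ 0 → 1 ≤ k.1 := by
    intro k hk
    by_contra hc
    push_neg at hc
    have hk0 : k.1 = 0 := by omega
    apply hk
    show xF t e tr k.1 = 0
    rw [hk0]
    exact xF_zero
  have hwfin : ∀ k : Fin j, (fun k : Fin j => wF t tr k.1) k ≠ 0 → 2 ≤ k.1 := by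
    intro k hk
    by_contra hc
    push_neg at hc
    exact hk (wF_zero ht (by omega))
  have hXsF : ∑ k : Fin j, xF t e tr k.1 = Xs := Fin.sum_univ_eq_sum_range _ j
  have hWsF : ∑ k : Fin j, wF t tr k.1 = Ws := Fin.sum_univ_eq_sum_range _ j
  have hUsF : ∑ k : Fin j, uF t e tr n0 k.1 = Us := Fin.sum_univ_eq_sum_range _ j
  have hshift : ∀ k : Fin j, shiftF (fun k : Fin j => xF t e tr k.1) k = xF t e tr (k.1 + 1) := by
    intro k
    unfold shiftF
    split
    · rfl
    · rename_i hnlt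
      rw [xF_gt (by omega)]
  by_cases hdle : Us + Xs + Ws - c ≤ Us
  · -- decrement route
    obtain ⟨d, hd, hds⟩ := distr (fun k : Fin j => uF t e tr n0 k.1) (Us + Xs + Ws - c)
      (by rw [hUsF]; omega)
    have hp := play_counts (j := j) (fun _ => 0)
      (fun k => (if k.1 = 0 then b0 else 0) + 3 * d k)
      (fun k => uF t e tr n0 k.1 - d k) (fun k => xF t e tr k.1) (fun k => wF t tr k.1)
      hxfin hwfin
    have ha : ∑ _k : Fin j, (0:ℕ) = 0 := by simp
    have hbb : ∑ k : Fin j, ((if k.1 = 0 then b0 else 0) + 3 * d k) = b := by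
      rw [Finset.sum_add_distrib, ← Finset.mul_sum, hds]
      have h1 : ∑ k : Fin j, (if k.1 = 0 then b0 else 0) = b0 := by
        rw [Fin.sum_univ_eq_sum_range (fun i => if i = 0 then b0 else 0) j]
        exact hiteb0
      omega
    have huu : ∑ k : Fin j, (uF t e tr n0 k.1 - d k) = Us - (Us + Xs + Ws - c) := by
      have h2 : ∑ k : Fin j, ((uF t e tr n0 k.1 - d k) + d k) = Us := by
        rw [Finset.sum_congr rfl fun k _ => (by have := hd k; omega :
          (uF t e tr n0 k.1 - d k) + d k = uF t e tr n0 k.1)]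
        exact hUsF
      rw [Finset.sum_add_distrib] at h2
      omega
    have hcc : ∑ k : Fin j, (uF t e tr n0 k.1 - d k) + ∑ k : Fin j, xF t e tr k.1 +
        ∑ k : Fin j, wF t tr k.1 = c := by
      rw [huu, hXsF, hWsF]
      omega
    rw [ha, hbb, hcc] at hp
    refine ⟨_, hp, ?_, ?_, ?_⟩
    · intro k
      dsimp only
      rw [hshift k, hWsF, hWs]
      have htot := hTOT k
      have hdk : d k ≤ uF t e tr n0 k.1 := hd k
      by_cases hk0 : k.1 = 0
      · rw [if_pos hk0, if_pos (by omega : k.1 ≤ 1)] at htot ⊢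
        omega
      · by_cases hk1 : k.1 ≤ 1
        · rw [if_neg hk0, if_pos hk1] at htot ⊢
          omega
        · rw [if_neg hk0, if_neg hk1] at htot ⊢
          omega
    · intro k
      right
      dsimp only
      rw [hshift k, hWsF, hWs]
      have hdk : d k ≤ uF t e tr n0 k.1 := hd k
      have hkj : k.1 < j := k.2
      by_cases hk0 : k.1 = 0
      · have hxk : xF t e tr k.1 = 0 := by rw [hk0]; exact xF_zero
        have hwk : wF t tr k.1 = 0 := wF_zero ht (Or.inl hk0)
        rw [if_pos hk0, if_pos (by omega : k.1 ≤ 1), hxk, hwk]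
        omega
      · by_cases hkt : k.1 < t
        · have h1k : 1 ≤ k.1 := by omega
          have hkey := key (t := t) (e := e) (tr := tr) (n0 := n0) ht he htr h1k hkt
          have hnv := nvF_ge (t := t) (e := e) hkt
          have hwk : wF t tr k.1 = 0 := wF_lt hkt
          have hxle := xF_le (t := t) (tr := tr) he k.1
          rw [if_neg hk0, hwk]
          by_cases hk1 : k.1 = 1
          · rw [if_pos hk1] at hkey
            rw [if_pos (by omega : k.1 ≤ 1)]
            have hWW : W = WF tr := rfl
            omega
          · rw [if_neg hk1] at hkey
            rw [if_neg (by omega : ¬ k.1 ≤ 1)]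
            omega
        · by_cases hkt2 : k.1 = t
          · have hu : uF t e tr n0 k.1 = 0 := by rw [hkt2]; exact uF_t ht
            have hx : xF t e tr k.1 = e := by rw [hkt2]; exact xF_t (by omega)
            have hx1 : xF t e tr (k.1 + 1) = 0 := by rw [hkt2]; exact xF_gt (by omega)
            have hwt : wF t tr k.1 = 2 := by rw [hkt2]; exact wF_t
            rw [if_neg hk0, if_neg (by omega : ¬ k.1 ≤ 1), hu, hx, hx1, hwt]
            omega
          · have hkt1 : k.1 = t + 1 := by omega
            have htr1 : tr = 1 := by omega
            have hu : uF t e tr n0 k.1 = 0 := by rw [hkt1]; exact uF_gt ht (by omega)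
            have hx : xF t e tr k.1 = 0 := by rw [hkt1]; exact xF_gt (by omega)
            have hx1 : xF t e tr (k.1 + 1) = 0 := by rw [hkt1]; exact xF_gt (by omega)
            have hwt : wF t tr k.1 = 1 := by rw [hkt1]; exact wF_t1 htr1
            rw [if_neg hk0, if_neg (by omega : ¬ k.1 ≤ 1), hu, hx, hx1, hwt]
            omega
    · intro k hk0
      right
      dsimp only
      rw [hshift k, hWsF, hWs]
      have hdk : d k ≤ uF t e tr n0 k.1 := hd k
      have hxk : xF t e tr k.1 = 0 := by rw [hk0]; exact xF_zero
      have hwk : wF t tr k.1 = 0 := wF_zero ht (Or.inl hk0)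
      rw [if_pos hk0, if_pos (by omega : k.1 ≤ 1), hxk, hwk]
      omega
  · -- u-only route
    have hXsle : Xs ≤ 2 * (t - 1) + e := by
      have hb : ∀ i ∈ Finset.range j, xF t e tr i ≤
          (if 1 ≤ i ∧ i < t then 2 else 0) + (if t ≤ i ∧ i < t + 1 then e else 0) := by
        intro i _
        by_cases hit : i = t
        · rw [hit, xF_t (by omega), if_neg (by omega), if_pos ⟨le_refl _, by omega⟩]
          omega
        · by_cases hlt : 1 ≤ i ∧ i < t
          · rw [if_pos hlt]
            have := xF_le (t := t) (tr := tr) he i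
            omega
          · have hx0' : xF t e tr i = 0 := by
              unfold xF
              rw [if_neg (by omega)]
            rw [hx0']
            omega
      have := Finset.sum_le_sum hb
      rw [Finset.sum_add_distrib, sum_range_ite, sum_range_ite] at this
      have hm1 : min t j = t := by omega
      have hm2 : min (t + 1) j = t + 1 := by omega
      rw [hm1, hm2] at this
      have he1 : (t + 1 - t) * e = e := by
        have : t + 1 - t = 1 := by omega
        rw [this, one_mul]
      rw [he1] at this
      rw [hXsdef]
      omega
    have hcapge : 2 + 2 * (t - 1) + e ≤ ∑ k : Fin j, n k / 3 := by
      have hb : ∀ k ∈ Finset.univ (α := Fin j),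
          (if k.1 = 0 then 2 else 0) + (if 1 ≤ k.1 ∧ k.1 < t then 2 else 0) +
            (if t ≤ k.1 ∧ k.1 < t + 1 then e else 0) ≤ n k / 3 := by
        intro k _
        have hkj : k.1 < j := k.2
        by_cases hk0 : k.1 = 0
        · have := h0 k hk0
          rw [if_pos hk0, if_neg (by omega), if_neg (by omega)]
          omega
        · by_cases hkt : k.1 < t
          · have hnk := hni k (by omega) (by omega)
            have hnv := nvF_ge (t := t) (e := e) hkt
            rw [if_neg hk0, if_pos ⟨by omega, hkt⟩, if_neg (by omega), hnk]
            omega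
          · by_cases hkt2 : k.1 = t
            · have hnk := hni k (by omega) (by omega)
              have hnv : nvF t e k.1 = 2 + 2 * e := by rw [hkt2]; unfold nvF; omega
              rw [if_neg hk0, if_neg (by omega), if_pos (by omega), hnk, hnv]
              omega
            · rw [if_neg hk0, if_neg (by omega), if_neg (by omega)]
              omega
      have h2 := Finset.sum_le_sum hb
      rw [Finset.sum_add_distrib, Finset.sum_add_distrib] at h2
      have e0 : ∑ k : Fin j, (if (k:ℕ) = 0 then (2:ℕ) else 0) = 2 := by
        rw [Fin.sum_univ_eq_sum_range (fun i => if i = 0 then (2:ℕ) else 0) j]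
        have hc : ∀ i ∈ Finset.range j, (if i = 0 then (2:ℕ) else 0) =
            (if 0 ≤ i ∧ i < 1 then 2 else 0) := by
          intro i _; split_ifs <;> omega
        rw [Finset.sum_congr rfl hc, sum_range_ite]
        have hm : min 1 j = 1 := by omega
        rw [hm]
      have e1 : ∑ k : Fin j, (if 1 ≤ (k:ℕ) ∧ (k:ℕ) < t then (2:ℕ) else 0) = 2 * (t - 1) := by
        rw [Fin.sum_univ_eq_sum_range (fun i => if 1 ≤ i ∧ i < t then (2:ℕ) else 0) j,
          sum_range_ite]
        have hm : min t j = t := by omega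
        rw [hm]
        omega
      have e2 : ∑ k : Fin j, (if t ≤ (k:ℕ) ∧ (k:ℕ) < t + 1 then e else 0) = e := by
        rw [Fin.sum_univ_eq_sum_range (fun i => if t ≤ i ∧ i < t + 1 then e else 0) j,
          sum_range_ite]
        have hm : min (t + 1) j = t + 1 := by omega
        rw [hm]
        have h1 : t + 1 - t = 1 := by omega
        rw [h1, one_mul]
      rw [e0, e1, e2] at h2
      exact h2
    have hcge : c ≤ ∑ k : Fin j, n k / 3 := by
      have h1 : c ≤ Xs + Ws - 1 := by omega
      rw [hWs, hW] at h1
      omega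
    obtain ⟨uu, huu, huus⟩ := distr (fun k : Fin j => n k / 3) c hcge
    have hp := play_counts (j := j) (fun _ => 0) (fun k => n k - 3 * uu k) uu
      (fun _ => 0) (fun _ => 0) (fun k hk => absurd rfl hk) (fun k hk => absurd rfl hk)
    have ha : ∑ _k : Fin j, (0:ℕ) = 0 := by simp
    have h3u : ∀ k : Fin j, 3 * uu k ≤ n k := by
      intro k
      have := huu k
      omega
    have hbb : ∑ k : Fin j, (n k - 3 * uu k) = b := by
      have h2 : ∑ k : Fin j, ((n k - 3 * uu k) + 3 * uu k) = ∑ k : Fin j, n k := by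
        refine Finset.sum_congr rfl fun k _ => ?_
        have := h3u k
        omega
      rw [Finset.sum_add_distrib, ← Finset.mul_sum, huus, hsum] at h2
      omega
    simp only [Finset.sum_const_zero, shiftF_zero, Nat.add_zero, Nat.zero_add, ite_self] at hp
    rw [hbb, huus] at hp
    refine ⟨_, hp, ?_, ?_, ?_⟩
    · intro k
      dsimp only
      have := h3u k
      omega
    · intro k
      right
      dsimp only
      have h3 := h3u k
      have hnk1 : 1 ≤ n k := by
        have hkj : k.1 < j := k.2
        by_cases hk0 : k.1 = 0
        · have := h0 k hk0; omega
        · by_cases hkt : k.1 ≤ t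
          · have hnk := hni k (by omega) hkt
            unfold nvF at hnk
            omega
          · have := htrail k (by omega)
            omega
      have hu3 : uu k ≤ n k / 3 := huu k
      omega
    · intro k hk0
      right
      dsimp only
      have h3 := h3u k
      have hn6 := h0 k hk0
      have hu3 : uu k ≤ n k / 3 := huu k
      omega


lemma simple_route {j : ℕ} (hj : 0 < j) (a b : ℕ) (n : Fin j → ℕ)
    (hpos : ∀ k, 0 < n k) (h0 : ∀ k : Fin j, (k : ℕ) = 0 → 2 ≤ n k)
    (hsum : ∑ k, n k = a + b) : EllipticReachable a b 0 n := by
  obtain ⟨aa, haa, haas⟩ := distr n a (by omega)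
  have hp := play_counts (j := j) aa (fun k => n k - aa k) (fun _ => 0) (fun _ => 0) (fun _ => 0)
    (fun _ hk => absurd rfl hk) (fun _ hk => absurd rfl hk)
  simp only [Finset.sum_const_zero, shiftF_zero, Nat.add_zero, Nat.zero_add, ite_self,
    Nat.mul_zero] at hp
  have hbb : ∑ k : Fin j, (n k - aa k) = b := by
    have h2 : ∑ k : Fin j, ((n k - aa k) + aa k) = ∑ k : Fin j, n k :=
      Finset.sum_congr rfl fun k _ => by have := haa k; omega
    rw [Finset.sum_add_distrib, haas, hsum] at h2
    omega
  rw [haas, hbb] at hp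
  refine ⟨_, hp, ?_, ?_, ?_⟩
  · intro k
    dsimp only
    have := haa k
    omega
  · intro k
    dsimp only
    have h1 := haa k
    have h2 := hpos k
    by_cases ha0 : aa k = 0
    · right; omega
    · left; omega
  · intro k hk0
    dsimp only
    have h1 := haa k
    have h2 := h0 k hk0
    by_cases ha0 : aa k = 0
    · right; omega
    · left; omega


end EllAux

open EllAux in
/-- Strengthened inductive statement: for `m ≥ 5`, with `a = 0` or `c = 0`, any
sequence of one of the three listed forms with `n₁ ∈ {2m, 2m−2, 2m−4}` and sum
`a + b + 3c` is `(a, b, c)`-elliptic-reachable. -/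
theorem elliptic_reachable_of_form_strong {j : ℕ} (hj : 0 < j) (m a b c : ℕ)
    (hm : 5 ≤ m) (hac : a = 0 ∨ c = 0) (n : Fin j → ℕ) (hpos : ∀ k, 0 < n k)
    (hsum : ∑ k, n k = a + b + 3 * c)
    (hn1 : n ⟨0, hj⟩ = 2 * m ∨ n ⟨0, hj⟩ = 2 * m - 2 ∨ n ⟨0, hj⟩ = 2 * m - 4)
    (hform :
      (m % 2 = 0 ∧ j = m / 2 + 1 ∧
        (∀ k : Fin j, 1 ≤ (k : ℕ) → (k : ℕ) < m / 2 → n k = 2 * m - 4 * (k : ℕ)) ∧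
        (∀ k : Fin j, (k : ℕ) = j - 1 → n k = 1)) ∨
      (m % 2 = 0 ∧ j = m / 2 ∧
        (∀ k : Fin j, 1 ≤ (k : ℕ) → n k = 2 * m - 4 * (k : ℕ))) ∨
      (m % 2 = 1 ∧ j = (m + 1) / 2 ∧
        (∀ k : Fin j, 1 ≤ (k : ℕ) → n k = 2 * m - 4 * (k : ℕ)))) :
    EllipticReachable a b c n := by
  have hn0ge : 6 ≤ n ⟨0, hj⟩ := by rcases hn1 with h | h | h <;> omega
  have h0 : ∀ k : Fin j, (k : ℕ) = 0 → 6 ≤ n k := by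
    intro k hk
    have : k = ⟨0, hj⟩ := Fin.ext hk
    rw [this]
    exact hn0ge
  rcases hac with ha0 | hc0
  · subst ha0
    rcases hform with ⟨hm2, hjj, hmid, hlast⟩ | ⟨hm2, hjj, hmid⟩ | ⟨hm2, hjj, hmid⟩
    · refine master (m / 2 - 1) 1 1 n b c (by omega) (by omega) (by omega) (by omega)
        h0 ?_ ?_ (by omega)
      · intro k h1 h2
        have := hmid k h1 (by omega)
        unfold nvF
        omega
      · intro k hk
        exact hlast k (by omega)
    · refine master (m / 2 - 1) 1 0 n b c (by omega) (by omega) (by omega) (by omega)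
        h0 ?_ ?_ (by omega)
      · intro k h1 h2
        have := hmid k h1
        unfold nvF
        omega
      · intro k hk
        have := k.2
        omega
    · refine master ((m + 1) / 2 - 1) 0 0 n b c (by omega) (by omega) (by omega) (by omega)
        h0 ?_ ?_ (by omega)
      · intro k h1 h2
        have := hmid k h1
        unfold nvF
        omega
      · intro k hk
        have := k.2
        omega
  · subst hc0
    exact simple_route hj a b n hpos (fun k hk => by have := h0 k hk; omega) (by omega)
end
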